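/- arXiv:1208.2425 — 7 statements merged into one kernel-verified Lean document; each statement's English description precedes it below -/
import Mathlib

section
/- Let H be a complex Hilbert space and A a bounded self-adjoint operator on H whose spectrum is contained in [λ₀, ∞) for some λ₀ > 0. Fix T > 0 and set R_T = ∫₀^T e^{-2tA} dt, a bounded self-adjoint operator on H. Then R_T is invertible, and for every x ∈ H one has ⟨R_T⁻¹ x, x⟩ ≤ 2 ‖A^{1/2} x‖² / (1 − e^{-2Tλ₀}); equivalently, ‖R_T^{-1/2} x‖² ≤ 2 ‖A^{1/2} x‖² / (1 − e^{-2Tλ₀}). -/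
open MeasureTheory

/-- Fractional power `A^s` of a (positive self-adjoint) bounded operator, via the
continuous functional calculus. -/
noncomputable def fracPow {H : Type*} [NormedAddCommGroup H] [InnerProductSpace ℂ H]
    [CompleteSpace H] (A : H →L[ℂ] H) (s : ℝ) : H →L[ℂ] H :=
  cfc (fun x : ℝ => x ^ s) A

namespace Stmt2Aux

noncomputable def gfun (T : ℝ) : ℝ → ℝ := fun x => (1 - Real.exp (-(2*T)*x)) / (2*x)

lemma exp_cfc {H : Type*} [NormedAddCommGroup H] [InnerProductSpace ℂ H] [CompleteSpace H]
    (A : H →L[ℂ] H) (hA : IsSelfAdjoint A) (t : ℝ) :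
    NormedSpace.exp ((-(2 * t)) • A) = cfc (fun μ : ℝ => Real.exp (-(2 * t) * μ)) A := by
  have h1 : IsSelfAdjoint ((-(2*t)) • A) := IsSelfAdjoint.smul (star_trivial _) hA
  rw [← CFC.real_exp_eq_normedSpace_exp h1,
    ← cfc_comp_const_mul (-(2*t)) Real.exp A]

lemma integral_eq_cfc {H : Type*} [NormedAddCommGroup H] [InnerProductSpace ℂ H] [CompleteSpace H]
    (A : H →L[ℂ] H) (hA : IsSelfAdjoint A)
    (lam : ℝ) (hlam : 0 < lam) (hspecR : ∀ μ ∈ spectrum ℝ A, lam ≤ μ)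
    (T : ℝ) :
    (∫ t in (0:ℝ)..T, cfc (fun μ : ℝ => Real.exp (-(2 * t) * μ)) A) = cfc (gfun T) A := by
  set K := spectrum ℝ A
  have hgc : ContinuousOn (gfun T) K := by
    apply ContinuousOn.div
    · fun_prop
    · fun_prop
    · intro x hx
      have := lt_of_lt_of_le hlam (hspecR x hx)
      positivity
  let F : C(ℝ, C(K, ℝ)) :=
    ContinuousMap.curry ⟨fun p : ℝ × K => Real.exp (-(2*p.1) * (p.2 : ℝ)), by fun_prop⟩
  have hFi : IntervalIntegrable F volume 0 T := F.continuous.intervalIntegrable _ _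
  let Φ : C(K, ℝ) →L[ℝ] (H →L[ℂ] H) :=
    ⟨(cfcHom hA (R := ℝ)).toAlgHom.toLinearMap, (cfcHom_isClosedEmbedding hA).continuous⟩
  have key : ∫ t in (0:ℝ)..T, F t = ⟨K.restrict (gfun T), hgc.restrict⟩ := by
    ext x
    have h1 := (ContinuousMap.evalCLM ℝ x).intervalIntegral_comp_comm hFi
    have h2 : ((∫ t in (0:ℝ)..T, F t) : C(K,ℝ)) x
        = ∫ t in (0:ℝ)..T, Real.exp (-(2*(x:ℝ)) * t) := by
      rw [show ((∫ t in (0:ℝ)..T, F t) : C(K,ℝ)) x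
        = (ContinuousMap.evalCLM ℝ x) (∫ t in (0:ℝ)..T, F t) from rfl, ← h1]
      refine intervalIntegral.integral_congr fun t ht => ?_
      show Real.exp (-(2*t) * (x:ℝ)) = _
      ring_nf
    rw [h2]
    have hx : (0:ℝ) < (x : ℝ) := lt_of_lt_of_le hlam (hspecR x x.2)
    have hc : -(2*(x:ℝ)) ≠ 0 := by nlinarith
    rw [intervalIntegral.integral_comp_mul_left Real.exp hc, mul_zero,
      integral_exp]
    show _ = gfun T x
    unfold gfun
    rw [Real.exp_zero]
    field_simp
    ring_nf
    rw [mul_comm (x:ℝ) (Real.exp _), mul_assoc, mul_inv_cancel₀ hx.ne']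
    ring
  have comm : (∫ t in (0:ℝ)..T, Φ (F t)) = Φ (∫ t in (0:ℝ)..T, F t) :=
    Φ.intervalIntegral_comp_comm hFi
  calc ∫ t in (0:ℝ)..T, cfc (fun μ : ℝ => Real.exp (-(2 * t) * μ)) A
      = ∫ t in (0:ℝ)..T, Φ (F t) := by
        refine intervalIntegral.integral_congr fun t ht => ?_
        rw [cfc_apply (fun μ : ℝ => Real.exp (-(2 * t) * μ)) A hA (by fun_prop)]
        rfl
    _ = cfc (gfun T) A := by rw [comm, key, cfc_apply (gfun T) A hA hgc]; rfl

lemma normsq_eq {H : Type*} [NormedAddCommGroup H] [InnerProductSpace ℂ H] [CompleteSpace H]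
    (S : H →L[ℂ] H) (hS : IsSelfAdjoint S) (x : H) :
    ‖S x‖ ^ 2 = (inner ℂ ((S * S) x) x : ℂ).re := by
  have hadj : ContinuousLinearMap.adjoint S = S := ContinuousLinearMap.isSelfAdjoint_iff'.mp hS
  have : (S * S) x = ContinuousLinearMap.adjoint S (S x) := by rw [hadj]; rfl
  rw [this, ContinuousLinearMap.adjoint_inner_left, ← inner_self_eq_norm_sq (𝕜 := ℂ)]
  rfl

end Stmt2Aux

open Stmt2Aux in
/-- With `A` self-adjoint, spectrum in `[λ₀, ∞)`, `λ₀ > 0`, `T > 0` and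
`R_T = ∫₀^T e^{-2tA} dt`, the operator `R_T` is invertible and for all `x`,
`⟨R_T⁻¹ x, x⟩ ≤ 2‖A^{1/2}x‖²/(1 - e^{-2Tλ₀})`, equivalently
`‖R_T^{-1/2} x‖² ≤ 2‖A^{1/2}x‖²/(1 - e^{-2Tλ₀})`. -/
theorem stmt2
    {H : Type*} [NormedAddCommGroup H] [InnerProductSpace ℂ H] [CompleteSpace H]
    (A : H →L[ℂ] H) (hA : IsSelfAdjoint A)
    (lam : ℝ) (hlam : 0 < lam) (hspec : ∀ z ∈ spectrum ℂ A, lam ≤ z.re)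
    (T : ℝ) (hT : 0 < T) (R : H →L[ℂ] H)
    (hR : R = ∫ t in (0:ℝ)..T, NormedSpace.exp ((-(2 * t)) • A)) :
    IsUnit R ∧
    ∀ x : H,
      ((inner ℂ ((Ring.inverse R) x) x : ℂ).re ≤
        2 * ‖fracPow A (1/2) x‖ ^ 2 / (1 - Real.exp (-(2 * T * lam)))) ∧
      (‖fracPow R (-(1/2)) x‖ ^ 2 ≤
        2 * ‖fracPow A (1/2) x‖ ^ 2 / (1 - Real.exp (-(2 * T * lam)))) := by
  -- real spectrum bound
  have hspecR : ∀ μ ∈ spectrum ℝ A, lam ≤ μ := by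
    intro μ hμ
    rw [← hA.spectrumRestricts.image] at hμ
    obtain ⟨z, hz, rfl⟩ := hμ
    exact hspec z hz
  have hpos : ∀ μ ∈ spectrum ℝ A, 0 < μ := fun μ hμ => lt_of_lt_of_le hlam (hspecR μ hμ)
  -- R = cfc g A
  have hR2 : R = cfc (gfun T) A := by
    rw [hR, ← integral_eq_cfc A hA lam hlam hspecR T]
    exact intervalIntegral.integral_congr fun t ht => exp_cfc A hA t
  have hgc : ContinuousOn (gfun T) (spectrum ℝ A) := by
    apply ContinuousOn.div
    · fun_prop
    · fun_prop
    · intro μ hμ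
      have := hpos μ hμ
      positivity
  have hd : 0 < 1 - Real.exp (-(2 * T * lam)) := by
    have : Real.exp (-(2 * T * lam)) < 1 := Real.exp_lt_one_iff.mpr (by nlinarith)
    linarith
  have hg_pos : ∀ μ ∈ spectrum ℝ A, 0 < gfun T μ := by
    intro μ hμ
    have hμ' := hpos μ hμ
    have h1 : Real.exp (-(2*T)*μ) < 1 := Real.exp_lt_one_iff.mpr (by nlinarith)
    have : 0 < 2 * μ := by linarith
    exact div_pos (by linarith) this
  have hg_ne : ∀ μ ∈ spectrum ℝ A, gfun T μ ≠ 0 := fun μ hμ => (hg_pos μ hμ).ne'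
  have hunit : IsUnit R := by
    rw [hR2]; exact (isUnit_cfc_iff (gfun T) A hgc hA).mpr hg_ne
  refine ⟨hunit, fun x => ?_⟩
  set c := 2 / (1 - Real.exp (-(2 * T * lam))) with hc
  -- inverse as cfc
  have hginv_c : ContinuousOn (fun μ => (gfun T μ)⁻¹) (spectrum ℝ A) :=
    hgc.inv₀ hg_ne
  have hinv : Ring.inverse R = cfc (fun μ => (gfun T μ)⁻¹) A := by
    rw [hR2, ← cfc_inv (gfun T) A hg_ne hgc hA]
  -- key scalar inequality
  have hscal : ∀ μ ∈ spectrum ℝ A, (gfun T μ)⁻¹ ≤ c * μ := by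
    intro μ hμ
    have hμ' := hpos μ hμ
    have he : Real.exp (-(2*T)*μ) ≤ Real.exp (-(2 * T * lam)) :=
      Real.exp_le_exp.mpr (by nlinarith [hspecR μ hμ])
    have hdμ : 0 < 1 - Real.exp (-(2*T)*μ) := by
      have : Real.exp (-(2*T)*μ) < 1 := Real.exp_lt_one_iff.mpr (by nlinarith)
      linarith
    have : (gfun T μ)⁻¹ = 2*μ / (1 - Real.exp (-(2*T)*μ)) := by
      unfold gfun; rw [inv_div]
    rw [this, hc, div_mul_eq_mul_div, mul_comm (2:ℝ) μ]
    apply div_le_div_of_nonneg_left (by linarith) hd ?_ |>.trans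
    · rw [mul_comm]
    · linarith
  have hle : cfc (fun μ => (gfun T μ)⁻¹) A ≤ cfc (fun μ : ℝ => c * μ) A :=
    cfc_mono hscal (hf := hginv_c) (hg := by fun_prop)
  have hcA : cfc (fun μ : ℝ => c * μ) A = c • A := cfc_const_mul_id c A hA
  -- positivity of difference
  have hposdiff : (c • A - cfc (fun μ => (gfun T μ)⁻¹) A).IsPositive := by
    rw [← hcA]; exact hle
  have hkey : ∀ y : H, (inner ℂ ((cfc (fun μ => (gfun T μ)⁻¹) A) y) y : ℂ).re ≤
      c * (inner ℂ (A y) y : ℂ).re := by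
    intro y
    have h0 := hposdiff.inner_nonneg_left y
    have : (inner ℂ ((c • A - cfc (fun μ => (gfun T μ)⁻¹) A) y) y : ℂ).re
        = c * (inner ℂ (A y) y : ℂ).re - (inner ℂ ((cfc (fun μ => (gfun T μ)⁻¹) A) y) y : ℂ).re := by
      rw [ContinuousLinearMap.sub_apply, inner_sub_left, ContinuousLinearMap.smul_apply,
        ← smul_one_smul ℂ c (A y), Complex.real_smul, mul_one, inner_smul_left,
        Complex.conj_ofReal]
      simp [Complex.sub_re, Complex.mul_re]
    replace h0 := (Complex.nonneg_iff.mp h0).1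
    rw [this] at h0
    linarith
  -- ‖A^{1/2} x‖² = re ⟪A x, x⟫
  have hhalf_c : ContinuousOn (fun μ : ℝ => μ ^ ((1:ℝ)/2)) (spectrum ℝ A) := fun μ hμ =>
    (Real.continuousAt_rpow_const μ _ (Or.inl (hpos μ hμ).ne')).continuousWithinAt
  have hsq : ‖fracPow A (1/2) x‖ ^ 2 = (inner ℂ (A x) x : ℂ).re := by
    have hB : IsSelfAdjoint (fracPow A (1/2)) := cfc_predicate _ _
    have hAA : fracPow A (1/2) * fracPow A (1/2) = A := by
      have hcg : cfc (fun μ : ℝ => μ ^ ((1:ℝ)/2) * μ ^ ((1:ℝ)/2)) A = cfc (id : ℝ → ℝ) A := by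
        apply cfc_congr
        intro μ hμ
        have hμ' := hpos μ hμ
        simp only [id]
        rw [← Real.rpow_add hμ']
        norm_num
      rw [fracPow, ← cfc_mul _ _ A hhalf_c hhalf_c, hcg, cfc_id ℝ A hA]
    rw [normsq_eq _ hB x, hAA]
  -- R^{-1/2}
  have hRinvhalf : ‖fracPow R (-(1/2)) x‖ ^ 2
      = (inner ℂ ((cfc (fun μ => (gfun T μ)⁻¹) A) x) x : ℂ).re := by
    have himg : ∀ y ∈ gfun T '' spectrum ℝ A, (0:ℝ) < y := by
      rintro y ⟨μ, hμ, rfl⟩; exact hg_pos μ hμ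
    have hcomp_c : ContinuousOn (fun y : ℝ => y ^ (-(1/2) : ℝ)) (gfun T '' spectrum ℝ A) :=
      fun y hy => (Real.continuousAt_rpow_const y _ (Or.inl (himg y hy).ne')).continuousWithinAt
    have hcomp : fracPow R (-(1/2)) = cfc (fun μ => (gfun T μ) ^ (-(1/2) : ℝ)) A := by
      rw [fracPow, hR2, ← cfc_comp' (fun y : ℝ => y ^ (-(1/2):ℝ)) (gfun T) A hcomp_c hgc hA]
    rw [hcomp]
    have hS : IsSelfAdjoint (cfc (fun μ => (gfun T μ) ^ (-(1/2) : ℝ)) A) := cfc_predicate _ _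
    have hc2 : ContinuousOn (fun μ => (gfun T μ) ^ (-(1/2) : ℝ)) (spectrum ℝ A) :=
      hcomp_c.comp hgc (Set.mapsTo_image _ _)
    have hSS : cfc (fun μ => (gfun T μ) ^ (-(1/2) : ℝ)) A
        * cfc (fun μ => (gfun T μ) ^ (-(1/2) : ℝ)) A = cfc (fun μ => (gfun T μ)⁻¹) A := by
      rw [← cfc_mul _ _ A hc2 hc2]
      apply cfc_congr
      intro μ hμ
      have hy := hg_pos μ hμ
      show gfun T μ ^ (-(1/2) : ℝ) * gfun T μ ^ (-(1/2) : ℝ) = (gfun T μ)⁻¹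
      rw [← Real.rpow_add hy]
      norm_num [Real.rpow_neg_one]
    rw [normsq_eq _ hS x, hSS]
  have hbound : (inner ℂ ((cfc (fun μ => (gfun T μ)⁻¹) A) x) x : ℂ).re ≤
      2 * ‖fracPow A (1/2) x‖ ^ 2 / (1 - Real.exp (-(2 * T * lam))) := by
    have := hkey x
    rw [hsq]
    calc _ ≤ c * (inner ℂ (A x) x : ℂ).re := this
      _ = 2 * (inner ℂ (A x) x : ℂ).re / (1 - Real.exp (-(2 * T * lam))) := by
          rw [hc]; ring
  constructor
  · rw [hinv]; exact hbound
  · rw [hRinvhalf]; exact hbound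
end

section
/- Let H be a complex Hilbert space and A a bounded linear operator on H. Let 0 < τ < T, let η : [−τ, 0] → H be continuously differentiable, and let φ : [0, T−τ] → H be continuous with ∫₀^{T−τ} e^{-(T−τ−s)A} φ(s) ds = η(−τ). Define ψ(t) = η′(t−T) + A η(t−T) for t ∈ [T−τ, T], and define Γ(t) = ∫₀^t e^{-(t−s)A} ( φ(s) 1_{[0, T−τ)}(s) + ψ(s) 1_{[T−τ, T]}(s) ) ds for t ∈ [0,T]. Then Γ(t) = η(t−T) for every t ∈ [T−τ, T]; in particular Γ(T) = η(0). -/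
open MeasureTheory Set

/-- With `0 < τ < T`, `η : [-τ,0] → H` C¹, `φ` continuous with
`∫₀^{T-τ} e^{-(T-τ-s)A} φ(s) ds = η(-τ)`, `ψ(t) = η'(t-T) + A η(t-T)` on `[T-τ,T]`, and
`Γ(t) = ∫₀^t e^{-(t-s)A}(φ(s) 1_{[0,T-τ)}(s) + ψ(s) 1_{[T-τ,T]}(s)) ds`, one has
`Γ(t) = η(t-T)` for `t ∈ [T-τ,T]`; in particular `Γ(T) = η(0)`. -/
theorem stmt7
    {H : Type*} [NormedAddCommGroup H] [InnerProductSpace ℂ H] [CompleteSpace H]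
    (A : H →L[ℂ] H) (τ T : ℝ) (hτ : 0 < τ) (hτT : τ < T)
    (η η' : ℝ → H)
    (hη : ∀ t ∈ Set.Icc (-τ) (0:ℝ), HasDerivWithinAt η (η' t) (Set.Icc (-τ) 0) t)
    (hη' : ContinuousOn η' (Set.Icc (-τ) 0))
    (φ : ℝ → H) (hφ : ContinuousOn φ (Set.Icc 0 (T - τ)))
    (hφint : (∫ s in (0:ℝ)..(T - τ), (NormedSpace.exp ((-(T - τ - s)) • A)) (φ s)) = η (-τ))
    (ψ : ℝ → H) (hψ : ∀ t, ψ t = η' (t - T) + A (η (t - T)))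
    (Γ : ℝ → H)
    (hΓ : ∀ t, Γ t = ∫ s in (0:ℝ)..t, (NormedSpace.exp ((-(t - s)) • A))
        (Set.indicator (Set.Ico (0:ℝ) (T - τ)) φ s
          + Set.indicator (Set.Icc (T - τ) T) ψ s)) :
    (∀ t ∈ Set.Icc (T - τ) T, Γ t = η (t - T)) ∧ Γ T = η 0 := by
  simp only [neg_sub] at hΓ hφint
  set a := T - τ with ha
  have haT : a < T := by rw [ha]; linarith
  have ha0 : 0 < a := by rw [ha]; linarith
  set E : ℝ → (H →L[ℂ] H) := fun u => NormedSpace.exp (u • A) with hE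
  have hEd : ∀ u : ℝ, HasDerivAt E (E u * A) u := by
    intro u
    have h2 := hasDerivAt_exp_smul_const (𝕂 := ℝ) A u
    exact h2
  have hEc : Continuous E := by
    rw [continuous_iff_continuousAt]; exact fun u => (hEd u).continuousAt
  have hEadd : ∀ u v : ℝ, E (u + v) = E u * E v := by
    intro u v
    have hc : Commute (u • A) (v • A) := ((Commute.refl A).smul_left u).smul_right v
    rw [hE]
    simpa [add_smul] using NormedSpace.exp_add_of_commute_of_mem_ball (𝕂 := ℂ) hc
      ((NormedSpace.expSeries_radius_eq_top ℂ (H →L[ℂ] H)).symm ▸ edist_lt_top _ _)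
      ((NormedSpace.expSeries_radius_eq_top ℂ (H →L[ℂ] H)).symm ▸ edist_lt_top _ _)
  have hE0 : E 0 = 1 := by simp [hE, NormedSpace.exp_zero]
  have hcontη : ContinuousOn η (Icc (-τ) 0) := fun s hs => (hη s hs).continuousWithinAt
  have hsubT : ∀ s ∈ Icc a T, s - T ∈ Icc (-τ) (0:ℝ) := by
    rintro s ⟨h1, h2⟩
    rw [ha] at h1
    exact ⟨by linarith, by linarith⟩
  have hcontψ : ContinuousOn ψ (Icc a T) := by
    have hψ' : ψ = fun s => η' (s - T) + A (η (s - T)) := funext hψ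
    rw [hψ']
    have hsub : ContinuousOn (fun s : ℝ => s - T) (Icc a T) :=
      (continuous_id.sub continuous_const).continuousOn
    exact (hη'.comp hsub hsubT).add
      (A.continuous.comp_continuousOn (hcontη.comp hsub hsubT))
  -- main claim
  have main : ∀ t ∈ Set.Icc a T, Γ t = η (t - T) := by
    intro t ht
    obtain ⟨hat, htT⟩ := ht
    set g : ℝ → H := fun s =>
      E (s - t) (Set.indicator (Set.Ico (0:ℝ) a) φ s + Set.indicator (Set.Icc a T) ψ s)
      with hg
    set g₁ : ℝ → H := fun s => E (s - t) (φ s) with hg₁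
    set g₂ : ℝ → H := fun s => E (s - t) (ψ s) with hg₂
    have hΓ' : Γ t = ∫ s in (0:ℝ)..t, g s := hΓ t
    have hEct : Continuous fun s : ℝ => E (s - t) :=
      hEc.comp (continuous_id.sub continuous_const)
    have contg₁ : ContinuousOn g₁ (Icc 0 a) :=
      hEct.continuousOn.clm_apply hφ
    have contg₂ : ContinuousOn g₂ (Icc a t) :=
      hEct.continuousOn.clm_apply (hcontψ.mono (Icc_subset_Icc le_rfl htT))
    have hane : ∀ᵐ s : ℝ, s ≠ a := by
      rw [ae_iff]
      have : {s : ℝ | ¬ s ≠ a} = {a} := by ext s; simp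
      rw [this]
      exact measure_singleton a
    have ig₁ : IntervalIntegrable g₁ volume 0 a := by
      apply ContinuousOn.intervalIntegrable
      rwa [uIcc_of_le ha0.le]
    have i1 : IntervalIntegrable g volume 0 a := by
      rw [intervalIntegrable_iff_integrableOn_Ioc_of_le ha0.le]
      have hig : IntegrableOn g₁ (Ioc 0 a) volume :=
        ((intervalIntegrable_iff_integrableOn_Ioc_of_le ha0.le).mp ig₁)
      refine hig.congr_fun_ae ?_
      have h1 : ∀ᵐ s ∂(volume.restrict (Ioc 0 a)), s ∈ Ioc 0 a :=
        ae_restrict_mem measurableSet_Ioc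
      have h2 : ∀ᵐ s ∂(volume.restrict (Ioc 0 a)), s ≠ a := ae_restrict_of_ae hane
      filter_upwards [h1, h2] with s hs hne
      have hs1 : s ∈ Ico (0:ℝ) a := ⟨hs.1.le, lt_of_le_of_ne hs.2 hne⟩
      have hs2 : s ∉ Icc a T := fun h => absurd h.1 (not_le.2 hs1.2)
      simp [hg, hg₁, indicator_of_mem hs1, indicator_of_notMem hs2]
    have heq2 : EqOn g g₂ (Icc a t) := by
      intro s hs
      have hs1 : s ∉ Ico (0:ℝ) a := fun h => absurd h.2 (not_lt.2 hs.1)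
      have hs2 : s ∈ Icc a T := ⟨hs.1, hs.2.trans htT⟩
      simp [hg, hg₂, indicator_of_notMem hs1, indicator_of_mem hs2]
    have ig₂ : IntervalIntegrable g₂ volume a t := by
      apply ContinuousOn.intervalIntegrable
      rwa [uIcc_of_le hat]
    have i2 : IntervalIntegrable g volume a t := by
      rw [intervalIntegrable_iff_integrableOn_Ioc_of_le hat]
      exact ((intervalIntegrable_iff_integrableOn_Ioc_of_le hat).mp ig₂).congr_fun
        (fun s hs => (heq2 (Ioc_subset_Icc_self hs)).symm) measurableSet_Ioc
    -- split the integral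
    have hsplit : (∫ s in (0:ℝ)..a, g s) + ∫ s in a..t, g s = ∫ s in (0:ℝ)..t, g s :=
      intervalIntegral.integral_add_adjacent_intervals i1 i2
    -- first piece
    have h01 : (∫ s in (0:ℝ)..a, g s) = ∫ s in (0:ℝ)..a, g₁ s := by
      apply intervalIntegral.integral_congr_ae
      filter_upwards [hane] with s hne hs
      rw [uIoc_of_le ha0.le] at hs
      have hs1 : s ∈ Ico (0:ℝ) a := ⟨hs.1.le, lt_of_le_of_ne hs.2 hne⟩
      have hs2 : s ∉ Icc a T := fun h => absurd h.1 (not_le.2 hs1.2)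
      simp [hg, hg₁, indicator_of_mem hs1, indicator_of_notMem hs2]
    have iEa : IntervalIntegrable (fun s => E (s - a) (φ s)) volume 0 a := by
      apply ContinuousOn.intervalIntegrable
      rw [uIcc_of_le ha0.le]
      exact ((hEc.comp (continuous_id.sub continuous_const)).continuousOn).clm_apply hφ
    have h02 : (∫ s in (0:ℝ)..a, g₁ s) = E (a - t) (η (-τ)) := by
      have hfe : g₁ = fun s => E (a - t) (E (s - a) (φ s)) := by
        funext s
        rw [hg₁]
        have hsum : s - t = (a - t) + (s - a) := by ring
        simp only [hsum, hEadd, ContinuousLinearMap.mul_apply]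
      rw [hfe, (E (a - t)).intervalIntegral_comp_comm iEa, hφint]
    -- second piece via FTC
    set F : ℝ → H := fun s => E (s - t) (η (s - T)) with hF
    have hFd : ∀ s ∈ Icc a t, HasDerivWithinAt F (g₂ s) (Icc a t) s := by
      intro s hs
      have hsT : s ∈ Icc a T := ⟨hs.1, hs.2.trans htT⟩
      have h5 : HasDerivAt (fun u : ℝ => E (u - t)) (E (s - t) * A) s := by
        have h5' : HasDerivAt (fun u : ℝ => E (u - t)) (E (s - t) * A) s :=
          HasDerivAt.comp_sub_const s t (by simpa using hEd (s - t))
        exact h5'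
      have h6 : HasDerivWithinAt (fun u : ℝ => η (u - T)) (η' (s - T)) (Icc a t) s := by
        have hmaps : MapsTo (fun u : ℝ => u - T) (Icc a t) (Icc (-τ) 0) :=
          fun u hu => hsubT u ⟨hu.1, hu.2.trans htT⟩
        have h6' := HasDerivWithinAt.scomp (𝕜 := ℝ) (𝕜' := ℝ) (F := H) s
          (hη (s - T) (hsubT s hsT))
          ((hasDerivWithinAt_id s (Icc a t)).sub_const T) hmaps
        simpa [Function.comp_def] using h6'
      have h5' : HasDerivWithinAt (fun u : ℝ => (E (u - t)).restrictScalars ℝ)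
          ((E (s - t) * A).restrictScalars ℝ) (Icc a t) s :=
        (((ContinuousLinearMap.restrictScalarsIsometry ℂ H H ℝ
          ℝ).toContinuousLinearMap).hasFDerivAt.comp_hasDerivAt s h5).hasDerivWithinAt
      have h7 := h5'.clm_apply h6
      have h8 : ((E (s - t) * A).restrictScalars ℝ) (η (s - T))
          + ((E (s - t)).restrictScalars ℝ) (η' (s - T)) = g₂ s := by
        simp only [ContinuousLinearMap.coe_restrictScalars', ContinuousLinearMap.mul_apply,
          hg₂, hψ s, map_add]
        exact add_comm _ _
      rw [← h8]
      exact h7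
    have hFTC : (∫ s in a..t, g₂ s) = F t - F a := by
      apply intervalIntegral.integral_eq_sub_of_hasDeriv_right_of_le hat
        (fun s hs => (hFd s hs).continuousWithinAt)
        ?_ ig₂
      intro s hs
      exact (hFd s (Ioo_subset_Icc_self hs)).mono_of_mem_nhdsWithin
        (Icc_mem_nhdsGT_of_mem ⟨hs.1.le, hs.2⟩)
    have h03 : (∫ s in a..t, g s) = ∫ s in a..t, g₂ s := by
      apply intervalIntegral.integral_congr
      rwa [uIcc_of_le hat]
    have hFt : F t = η (t - T) := by rw [hF]; simp [hE0]
    have hFa : F a = E (a - t) (η (-τ)) := by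
      have haτ : a - T = -τ := by rw [ha]; ring
      simp only [hF, haτ]
    rw [hΓ', ← hsplit, h01, h02, h03, hFTC, hFt, hFa]
    abel
  exact ⟨main, by simpa using main T ⟨haT.le, le_rfl⟩⟩
end

section
/- Let H be a normed vector space, τ ≥ 0, a ≥ 0, L ≥ 0, and let g : [0, ∞) → [0, ∞) be locally integrable. Let y : [−τ, ∞) → H be continuous with y(t) = 0 for all t ∈ [−τ, 0], and suppose that for every t ≥ 0, ‖y(t)‖ ≤ a ∫₀^t ‖y(s)‖ ds + L ∫₀^t ( sup_{u ∈ [s−τ, s]} ‖y(u)‖ ) ds + ∫₀^t g(s) ds. Then for every t ≥ 0, sup_{u ∈ [t−τ, t]} ‖y(u)‖ ≤ e^{(L+a)t} ∫₀^t g(s) ds. -/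
open MeasureTheory

/-- A Gronwall-type lemma with delay: if `y` is continuous on `[-τ,∞)`,
vanishes on `[-τ,0]`, and satisfies
`‖y(t)‖ ≤ a∫₀^t ‖y‖ + L∫₀^t sup_{u∈[s-τ,s]}‖y(u)‖ ds + ∫₀^t g`, then
`sup_{u∈[t-τ,t]} ‖y(u)‖ ≤ e^{(L+a)t} ∫₀^t g` for all `t ≥ 0`. -/
theorem stmt8
    {H : Type*} [NormedAddCommGroup H]
    (τ a L : ℝ) (hτ : 0 ≤ τ) (ha : 0 ≤ a) (hL : 0 ≤ L)
    (g : ℝ → ℝ) (hg0 : ∀ s, 0 ≤ s → 0 ≤ g s)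
    (hgloc : LocallyIntegrableOn g (Set.Ici 0))
    (y : ℝ → H) (hy : ContinuousOn y (Set.Ici (-τ)))
    (hy0 : ∀ t ∈ Set.Icc (-τ) (0:ℝ), y t = 0)
    (hbound : ∀ t, 0 ≤ t →
      ‖y t‖ ≤ a * (∫ s in (0:ℝ)..t, ‖y s‖)
        + L * (∫ s in (0:ℝ)..t, ⨆ u : Set.Icc (s - τ) s, ‖y (u : ℝ)‖)
        + ∫ s in (0:ℝ)..t, g s) :
    ∀ t, 0 ≤ t →
      (⨆ u : Set.Icc (t - τ) t, ‖y (u : ℝ)‖) ≤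
        Real.exp ((L + a) * t) * ∫ s in (0:ℝ)..t, g s := by
  intro t₀ ht₀
  -- running sup of ‖y‖ over [-τ, t]
  set M : ℝ → ℝ := fun t => sSup ((fun u => ‖y u‖) '' Set.Icc (-τ) t) with hM
  have hτ0 : (-τ : ℝ) ≤ 0 := neg_nonpos.mpr hτ
  have hMb : ∀ t : ℝ, BddAbove ((fun u => ‖y u‖) '' Set.Icc (-τ) t) := by
    intro t
    exact (isCompact_Icc.image_of_continuousOn
      ((hy.mono Set.Icc_subset_Ici_self).norm)).bddAbove
  have hle : ∀ t : ℝ, ∀ u ∈ Set.Icc (-τ) t, ‖y u‖ ≤ M t := by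
    intro t u hu
    exact le_csSup (hMb t) ⟨u, hu, rfl⟩
  have hM0 : ∀ t : ℝ, 0 ≤ M t := by
    intro t
    rcases le_or_gt (-τ) t with h | h
    · exact le_trans (norm_nonneg _) (hle t t ⟨h, le_refl t⟩)
    · have : Set.Icc (-τ) t = (∅ : Set ℝ) := Set.Icc_eq_empty (not_le.mpr h)
      simp [hM, this, Real.sSup_empty]
  have hMono : Monotone M := by
    intro s t hst
    rcases le_or_gt (-τ) s with h | h
    · exact csSup_le_csSup (hMb t) ⟨‖y s‖, ⟨s, ⟨h, le_refl s⟩, rfl⟩⟩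
        (Set.image_mono (Set.Icc_subset_Icc_right hst))
    · have : Set.Icc (-τ) s = (∅ : Set ℝ) := Set.Icc_eq_empty (not_le.mpr h)
      simp only [hM, this, Set.image_empty, Real.sSup_empty]
      exact hM0 t
  have hMint : ∀ b c : ℝ, IntervalIntegrable M volume b c := fun b c =>
    hMono.intervalIntegrable
  -- the primitive of M
  set F : ℝ → ℝ := fun t => ∫ s in (0:ℝ)..t, M s with hF
  have hFcont : Continuous F := intervalIntegral.continuous_primitive hMint 0
  have hFmono : ∀ b c : ℝ, 0 ≤ b → b ≤ c → F b ≤ F c := by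
    intro b c hb hbc
    have : F c - F b = ∫ s in b..c, M s := by
      rw [hF]
      exact intervalIntegral.integral_interval_sub_left (hMint 0 c) (hMint 0 b)
    nlinarith [intervalIntegral.integral_nonneg (μ := volume) (f := M) hbc (fun u _ => hM0 u)]
  have hF0 : ∀ b : ℝ, 0 ≤ b → 0 ≤ F b := by
    intro b hb
    exact intervalIntegral.integral_nonneg hb (fun u _ => hM0 u)
  set K : ℝ := L + a with hK
  set C : ℝ := ∫ s in (0:ℝ)..t₀, g s with hC
  have hgint : ∀ b c : ℝ, 0 ≤ b → b ≤ c → IntervalIntegrable g volume b c := by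
    intro b c hb hbc
    have : IntegrableOn g (Set.Icc b c) volume :=
      hgloc.integrableOn_compact_subset
        (Set.Icc_subset_Ici_self.trans (Set.Ici_subset_Ici.mpr hb)) isCompact_Icc
    rw [← Set.uIcc_of_le hbc] at this
    exact this.intervalIntegrable
  have hC0 : 0 ≤ C :=
    intervalIntegral.integral_nonneg ht₀ (fun u hu => hg0 u hu.1)
  -- a helper: ∫ of anything sandwiched by 0 and M on [0,u] is ≤ F u
  have hsand : ∀ (h : ℝ → ℝ) (u : ℝ), 0 ≤ u → (∀ s ∈ Set.Icc (0:ℝ) u, 0 ≤ h s) →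
      (∀ s ∈ Set.Icc (0:ℝ) u, h s ≤ M s) → (∫ s in (0:ℝ)..u, h s) ≤ F u := by
    intro h u hu h0 hhM
    by_cases hint : IntervalIntegrable h volume 0 u
    · exact intervalIntegral.integral_mono_on hu hint (hMint 0 u) hhM
    · rw [intervalIntegral.integral_undef hint]
      exact hF0 u hu
  -- key inequality: M u ≤ K * F u + C on [0, t₀]
  have key : ∀ u ∈ Set.Icc (0:ℝ) t₀, M u ≤ K * F u + C := by
    intro u hu
    have hKFC : 0 ≤ K * F u + C :=
      add_nonneg (mul_nonneg (add_nonneg hL ha) (hF0 u hu.1)) hC0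
    refine csSup_le ⟨‖y u‖, ⟨u, ⟨le_trans hτ0 hu.1, le_refl u⟩, rfl⟩⟩ ?_
    rintro x ⟨v, hv, rfl⟩
    rcases le_or_gt v 0 with hv0 | hv0
    · show ‖y v‖ ≤ K * F u + C
      rw [hy0 v ⟨hv.1, hv0⟩]
      simpa using hKFC
    -- v ∈ (0, u]
    have hvu : v ≤ u := hv.2
    have hv0' : (0:ℝ) ≤ v := le_of_lt hv0
    have h1 : (∫ s in (0:ℝ)..v, ‖y s‖) ≤ F v := by
      refine hsand _ v hv0' (fun s _ => norm_nonneg _) ?_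
      intro s hs
      exact hle s s ⟨le_trans hτ0 hs.1, le_refl s⟩
    have h2 : (∫ s in (0:ℝ)..v, ⨆ w : Set.Icc (s - τ) s, ‖y (w : ℝ)‖) ≤ F v := by
      refine hsand _ v hv0' ?_ ?_
      · intro s hs
        have hne : Nonempty (Set.Icc (s - τ) s) :=
          Set.nonempty_Icc.mpr (by linarith) |>.to_subtype
        exact Real.iSup_nonneg (fun w => norm_nonneg _)
      · intro s hs
        have hne : Nonempty (Set.Icc (s - τ) s) :=
          Set.nonempty_Icc.mpr (by linarith) |>.to_subtype
        refine ciSup_le ?_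
        rintro ⟨w, hw⟩
        exact hle s w ⟨le_trans (by linarith [hs.1] : (-τ:ℝ) ≤ s - τ) hw.1, hw.2⟩
    have h3 : (∫ s in (0:ℝ)..v, g s) ≤ C := by
      have hsplit : C = (∫ s in (0:ℝ)..v, g s) + ∫ s in v..t₀, g s := by
        rw [hC]
        exact (intervalIntegral.integral_add_adjacent_intervals
          (hgint 0 v le_rfl hv0') (hgint v t₀ hv0' (hvu.trans hu.2))).symm
      have : 0 ≤ ∫ s in v..t₀, g s :=
        intervalIntegral.integral_nonneg (hvu.trans hu.2)
          (fun s hs => hg0 s (le_trans hv0' hs.1))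
      linarith
    have hb := hbound v hv0'
    have hFv : F v ≤ F u := hFmono v u hv0' hvu
    calc ‖y v‖ ≤ a * (∫ s in (0:ℝ)..v, ‖y s‖)
        + L * (∫ s in (0:ℝ)..v, ⨆ w : Set.Icc (s - τ) s, ‖y (w : ℝ)‖)
        + ∫ s in (0:ℝ)..v, g s := hb
      _ ≤ a * F u + L * F u + C := by
          gcongr
          · exact h1.trans hFv
          · exact h2.trans hFv
      _ = K * F u + C := by rw [hK]; ring
  -- Gronwall for F
  have gron : ∀ x ∈ Set.Icc (0:ℝ) t₀, F x ≤ gronwallBound 0 K C (x - 0) := by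
    refine le_gronwallBound_of_liminf_deriv_right_le (f' := fun x => K * F x + C)
      hFcont.continuousOn ?_ (by simp [hF]) (fun x _ => le_refl _)
    intro x hx r hr
    refine Filter.Eventually.frequently ?_
    have hcont : Filter.Tendsto (fun z => K * F z + C) (nhdsWithin x (Set.Ioi x)) (nhds (K * F x + C)) := by
      exact ((hFcont.const_smul K).add continuous_const).continuousAt.continuousWithinAt.tendsto
    have h1 : ∀ᶠ z in nhdsWithin x (Set.Ioi x), K * F z + C < r :=
      hcont.eventually (Filter.Tendsto.eventually_lt_const hr Filter.tendsto_id) |>.mono (fun z hz => hz)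
    have h2 : Set.Ioo x t₀ ∈ nhdsWithin x (Set.Ioi x) := Ioo_mem_nhdsGT_of_mem ⟨le_refl x, hx.2⟩
    filter_upwards [h1, h2] with z hz1 hz2
    have hxz : x < z := hz2.1
    have hquot : (z - x)⁻¹ * (F z - F x) ≤ M z := by
      have hFz : F z - F x = ∫ s in x..z, M s := by
        rw [hF]
        exact intervalIntegral.integral_interval_sub_left (hMint 0 z) (hMint 0 x)
      have hint : (∫ s in x..z, M s) ≤ (z - x) * M z := by
        have := intervalIntegral.integral_mono_on (le_of_lt hxz) (hMint x z)
          (intervalIntegrable_const (c := M z)) (fun s hs => hMono hs.2)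
        simpa [smul_eq_mul, mul_comm] using this
      rw [hFz, inv_mul_le_iff₀ (by linarith : (0:ℝ) < z - x)]
      linarith [hint]
    have hMz : M z ≤ K * F z + C := key z ⟨le_trans hx.1 (le_of_lt hxz), le_of_lt hz2.2⟩
    exact lt_of_le_of_lt (hquot.trans hMz) hz1
  -- conclude
  have hFt₀ : F t₀ ≤ gronwallBound 0 K C t₀ := by
    simpa using gron t₀ ⟨ht₀, le_refl _⟩
  have hMt₀ : M t₀ ≤ K * F t₀ + C := key t₀ ⟨ht₀, le_refl _⟩
  have hfinal : K * gronwallBound 0 K C t₀ + C ≤ Real.exp (K * t₀) * C := by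
    by_cases hK0 : K = 0
    · rw [hK0]
      simp
    · rw [gronwallBound_of_K_ne_0 hK0]
      have : K * (0 * Real.exp (K * t₀) + C / K * (Real.exp (K * t₀) - 1)) + C
          = C * Real.exp (K * t₀) := by
        field_simp
        ring
      rw [this, mul_comm]
  have hsup : (⨆ u : Set.Icc (t₀ - τ) t₀, ‖y (u : ℝ)‖) ≤ M t₀ := by
    have hne : Nonempty (Set.Icc (t₀ - τ) t₀) :=
      Set.nonempty_Icc.mpr (by linarith) |>.to_subtype
    refine ciSup_le ?_
    rintro ⟨w, hw⟩
    exact hle t₀ w ⟨le_trans (by linarith : (-τ:ℝ) ≤ t₀ - τ) hw.1, hw.2⟩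
  calc (⨆ u : Set.Icc (t₀ - τ) t₀, ‖y (u : ℝ)‖) ≤ M t₀ := hsup
    _ ≤ K * F t₀ + C := hMt₀
    _ ≤ K * gronwallBound 0 K C t₀ + C := by
        gcongr
    _ ≤ Real.exp (K * t₀) * C := hfinal
    _ = Real.exp ((L + a) * t₀) * ∫ s in (0:ℝ)..t₀, g s := by rw [hK, hC]
end

section
/- Let H be a normed vector space, 0 < τ < T, let φ : [0, T−τ] → H be Bochner measurable with ∫₀^{T−τ} ‖φ(s)‖² ds < ∞, let η : [−τ, 0] → H be continuous with sup norm ‖η‖_∞, and let Γ : [−τ, T] → H be a Borel measurable function such that Γ(t) = 0 for t ∈ [−τ, 0], ‖Γ(t)‖ ≤ ∫₀^t ‖φ(s)‖ ds for t ∈ [0, T−τ), and Γ(t) = η(t−T) for t ∈ [T−τ, T]; assume the map t ↦ sup_{s ∈ [t−τ, t]} ‖Γ(s)‖ is measurable. Then ∫₀^T ( sup_{s ∈ [t−τ, t]} ‖Γ(s)‖ )² dt ≤ ((T−τ)²/2) ∫₀^{T−τ} ‖φ(s)‖² ds + τ · max{ (T−τ) ∫₀^{T−τ} ‖φ(s)‖²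 ds , ‖η‖_∞² }. -/
open MeasureTheory

/-- Cauchy–Schwarz: `(∫₀^c f)² ≤ c ∫₀^c f²` for nonneg `f`. -/
lemma cs_aux {f : ℝ → ℝ} {c : ℝ} (hc : 0 ≤ c) (hf0 : ∀ s, 0 ≤ f s)
    (hm : AEStronglyMeasurable f (volume.restrict (Set.Ioc 0 c)))
    (h2 : IntegrableOn (fun s => f s ^ 2) (Set.Ioc 0 c)) :
    (∫ s in Set.Ioc 0 c, f s) ^ 2 ≤ c * ∫ s in Set.Ioc 0 c, f s ^ 2 := by
  set μ := volume.restrict (Set.Ioc 0 c) with hμ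
  haveI : IsFiniteMeasure μ := by
    constructor
    rw [hμ, Measure.restrict_apply_univ]
    exact measure_Ioc_lt_top
  have hpq : Real.HolderConjugate 2 2 := by
    rw [Real.holderConjugate_iff_eq_conjExponent one_lt_two]; norm_num
  have h2' : ENNReal.ofReal (2:ℝ) = 2 := by norm_num
  have hf2 : MemLp f (ENNReal.ofReal (2:ℝ)) μ := by
    rw [h2']
    exact (memLp_two_iff_integrable_sq hm).2 h2
  have hg2 : MemLp (fun _ : ℝ => (1:ℝ)) (ENNReal.ofReal (2:ℝ)) μ := by
    rw [h2']; exact memLp_const 1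
  have h := integral_mul_le_Lp_mul_Lq_of_nonneg hpq
    (Filter.Eventually.of_forall hf0)
    (Filter.Eventually.of_forall fun _ => (zero_le_one : (0:ℝ) ≤ 1)) hf2 hg2
  simp only [mul_one, Real.one_rpow] at h
  have hrw : ∀ x : ℝ, x ^ (2:ℝ) = x ^ 2 := fun x => by
    rw [show (2:ℝ) = ((2:ℕ):ℝ) by norm_num, Real.rpow_natCast]
  simp only [hrw] at h
  have hμu : ∫ _ : ℝ, (1:ℝ) ∂μ = c := by
    simp [hμ, Real.volume_Ioc, hc]
  rw [hμu] at h
  have hJ0 : 0 ≤ ∫ s in Set.Ioc 0 c, f s ^ 2 := integral_nonneg fun s => sq_nonneg _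
  have hI0 : 0 ≤ ∫ s in Set.Ioc 0 c, f s := integral_nonneg fun s => hf0 s
  calc (∫ s in Set.Ioc 0 c, f s) ^ 2
      ≤ ((∫ s in Set.Ioc 0 c, f s ^ 2) ^ (1/(2:ℝ)) * c ^ (1/(2:ℝ))) ^ 2 :=
        pow_le_pow_left₀ hI0 h 2
    _ = c * ∫ s in Set.Ioc 0 c, f s ^ 2 := by
        rw [mul_pow, ← Real.rpow_natCast ((∫ s in Set.Ioc 0 c, f s ^ 2) ^ (1/(2:ℝ))) 2,
          ← Real.rpow_natCast (c ^ (1/(2:ℝ))) 2, ← Real.rpow_mul hJ0, ← Real.rpow_mul hc]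
        norm_num [mul_comm]

/-- For `Γ` vanishing on `[-τ,0]`, dominated by `∫₀^t ‖φ‖` on
`[0,T-τ)`, and equal to `η(·-T)` on `[T-τ,T]`, the sliding supremum satisfies
`∫₀^T (sup_{s∈[t-τ,t]}‖Γ(s)‖)² dt ≤ ((T-τ)²/2)∫₀^{T-τ}‖φ‖² + τ max{(T-τ)∫₀^{T-τ}‖φ‖², ‖η‖_∞²}`. -/
theorem stmt9
    {H : Type*} [NormedAddCommGroup H]
    (τ T : ℝ) (hτ : 0 < τ) (hτT : τ < T)
    (φ : ℝ → H) (hφm : StronglyMeasurable φ)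
    (hφ2 : IntegrableOn (fun s => ‖φ s‖ ^ 2) (Set.Ioc 0 (T - τ)))
    (η : ℝ → H) (hη : ContinuousOn η (Set.Icc (-τ) 0))
    (Γ : ℝ → H) (hΓm : StronglyMeasurable Γ)
    (hΓ0 : ∀ t ∈ Set.Icc (-τ) (0:ℝ), Γ t = 0)
    (hΓ1 : ∀ t ∈ Set.Ico (0:ℝ) (T - τ), ‖Γ t‖ ≤ ∫ s in (0:ℝ)..t, ‖φ s‖)
    (hΓ2 : ∀ t ∈ Set.Icc (T - τ) T, Γ t = η (t - T))
    (hsupm : Measurable fun t : ℝ => ⨆ s : Set.Icc (t - τ) t, ‖Γ (s : ℝ)‖) :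
    (∫ t in (0:ℝ)..T, (⨆ s : Set.Icc (t - τ) t, ‖Γ (s : ℝ)‖) ^ 2) ≤
      (T - τ) ^ 2 / 2 * (∫ s in (0:ℝ)..(T - τ), ‖φ s‖ ^ 2)
        + τ * max ((T - τ) * ∫ s in (0:ℝ)..(T - τ), ‖φ s‖ ^ 2)
            ((⨆ s : Set.Icc (-τ) (0:ℝ), ‖η (s : ℝ)‖) ^ 2) := by
  have hT0 : 0 < T - τ := sub_pos.2 hτT
  set S : ℝ → ℝ := fun t => ⨆ s : Set.Icc (t - τ) t, ‖Γ (s : ℝ)‖ with hSdef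
  set Cη : ℝ := ⨆ s : Set.Icc (-τ) (0:ℝ), ‖η (s : ℝ)‖ with hCdef
  set A : ℝ := ∫ s in (0:ℝ)..(T - τ), ‖φ s‖ ^ 2 with hAdef
  set f : ℝ → ℝ := fun s => ‖φ s‖ with hfdef
  -- basic facts
  have hfm : AEStronglyMeasurable f volume := hφm.norm.aestronglyMeasurable
  have hAeq : A = ∫ s in Set.Ioc 0 (T - τ), f s ^ 2 :=
    intervalIntegral.integral_of_le hT0.le
  have hA0 : 0 ≤ A := by
    rw [hAeq]; exact integral_nonneg fun s => sq_nonneg _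
  -- integrability of f on Ioc 0 (T-τ)
  have hf_int : IntegrableOn f (Set.Ioc 0 (T - τ)) := by
    refine Integrable.mono' ((integrableOn_const (C := (1:ℝ)) measure_Ioc_lt_top.ne).add hφ2)
      hfm.restrict (Filter.Eventually.of_forall fun s => ?_)
    have h1 : 0 ≤ f s := norm_nonneg _
    rw [Real.norm_of_nonneg h1]
    show f s ≤ 1 + f s ^ 2
    nlinarith
  set B : ℝ := ∫ s in Set.Ioc 0 (T - τ), f s with hBdef
  have hB0 : 0 ≤ B := integral_nonneg fun s => norm_nonneg _
  -- monotonicity of partial integrals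
  have hmono : ∀ a b : ℝ, 0 < a → a ≤ b → b ≤ T - τ →
      (∫ s in Set.Ioc 0 a, f s) ≤ ∫ s in Set.Ioc 0 b, f s := by
    intro a b ha hab hb
    refine setIntegral_mono_set (hf_int.mono_set (Set.Ioc_subset_Ioc_right hb))
      (Filter.Eventually.of_forall fun s => norm_nonneg _)
      (HasSubset.Subset.eventuallyLE (Set.Ioc_subset_Ioc_right hab))
  -- η sup facts
  have hbddη : BddAbove (Set.range fun s : Set.Icc (-τ) (0:ℝ) => ‖η (s : ℝ)‖) := by
    obtain ⟨M, hM⟩ := (isCompact_Icc.image_of_continuousOn hη.norm).bddAbove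
    exact ⟨M, by rintro y ⟨⟨x, hx⟩, rfl⟩; exact hM (Set.mem_image_of_mem _ hx)⟩
  have hηle : ∀ x ∈ Set.Icc (-τ) (0:ℝ), ‖η x‖ ≤ Cη := fun x hx => le_ciSup hbddη ⟨x, hx⟩
  have hCη0 : 0 ≤ Cη :=
    le_trans (norm_nonneg (η 0)) (hηle 0 ⟨neg_nonpos.2 hτ.le, le_refl 0⟩)
  -- global bound on Γ
  have hΓbound : ∀ s : ℝ, -τ ≤ s → s ≤ T → ‖Γ s‖ ≤ max B Cη := by
    intro s h1 h2
    rcases le_or_gt s 0 with h0 | h0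
    · rw [hΓ0 s ⟨h1, h0⟩, norm_zero]; exact le_max_of_le_left hB0
    · rcases lt_or_ge s (T - τ) with h3 | h3
      · refine le_max_of_le_left ((hΓ1 s ⟨h0.le, h3⟩).trans ?_)
        rw [intervalIntegral.integral_of_le h0.le]
        exact hmono s (T - τ) h0 h3.le le_rfl
      · rw [hΓ2 s ⟨h3, h2⟩]
        exact le_max_of_le_right (hηle _ ⟨by linarith, by linarith⟩)
  -- S bounds
  have hne : ∀ t : ℝ, Nonempty (Set.Icc (t - τ) t) := fun t =>
    Set.Nonempty.to_subtype (Set.nonempty_Icc.2 (by linarith))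
  have hbddS : ∀ t : ℝ, 0 ≤ t → t ≤ T →
      BddAbove (Set.range fun s : Set.Icc (t - τ) t => ‖Γ (s : ℝ)‖) := by
    intro t h1 h2
    refine ⟨max B Cη, ?_⟩
    rintro y ⟨⟨s, hs⟩, rfl⟩
    exact hΓbound s (by linarith [hs.1]) (by linarith [hs.2])
  have hSle : ∀ t : ℝ, 0 ≤ t → t ≤ T → S t ≤ max B Cη := by
    intro t h1 h2
    haveI := hne t
    exact ciSup_le fun ⟨s, hs⟩ => hΓbound s (by linarith [hs.1]) (by linarith [hs.2])
  have hS0 : ∀ t : ℝ, 0 ≤ t → t ≤ T → 0 ≤ S t := by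
    intro t h1 h2
    exact le_trans (norm_nonneg (Γ t))
      (le_ciSup (hbddS t h1 h2) ⟨t, ⟨by linarith, le_rfl⟩⟩)
  -- integrability of S^2
  have hSsq_int : ∀ a b : ℝ, 0 ≤ a → a ≤ b → b ≤ T →
      IntegrableOn (fun t => S t ^ 2) (Set.Ioc a b) := by
    intro a b ha hab hb
    refine Integrable.mono' (integrableOn_const (C := (max B Cη) ^ 2)
      measure_Ioc_lt_top.ne) (hsupm.pow_const 2).aestronglyMeasurable.restrict
      ((ae_restrict_iff' measurableSet_Ioc).2 (Filter.Eventually.of_forall fun t ht => ?_))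
    have h1 : 0 ≤ t := le_trans ha ht.1.le
    have h2 : t ≤ T := le_trans ht.2 hb
    rw [Real.norm_of_nonneg (sq_nonneg _)]
    exact pow_le_pow_left₀ (hS0 t h1 h2) (hSle t h1 h2) 2
  have hint1 : IntervalIntegrable (fun t => S t ^ 2) volume 0 (T - τ) :=
    (intervalIntegrable_iff_integrableOn_Ioc_of_le hT0.le).2
      (hSsq_int 0 (T - τ) le_rfl hT0.le (by linarith))
  have hint2 : IntervalIntegrable (fun t => S t ^ 2) volume (T - τ) T :=
    (intervalIntegrable_iff_integrableOn_Ioc_of_le (by linarith)).2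
      (hSsq_int (T - τ) T hT0.le (by linarith) le_rfl)
  -- split the integral
  have hsplit := intervalIntegral.integral_add_adjacent_intervals hint1 hint2
  rw [show (∫ t in (0:ℝ)..T, S t ^ 2)
      = (∫ t in (0:ℝ)..(T - τ), S t ^ 2) + ∫ t in (T - τ)..T, S t ^ 2 from hsplit.symm]
  have hB2 : B ^ 2 ≤ (T - τ) * A := by
    rw [hAeq]
    exact cs_aux hT0.le (fun s => norm_nonneg _) hfm.restrict hφ2
  -- Estimate 1
  have est1 : (∫ t in (0:ℝ)..(T - τ), S t ^ 2) ≤ (T - τ) ^ 2 / 2 * A := by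
    have hae : ∀ᵐ t ∂(volume.restrict (Set.Ioc 0 (T - τ))), S t ^ 2 ≤ t * A := by
      have hne' : ∀ᵐ t : ℝ ∂volume, t ≠ T - τ := by
        rw [ae_iff]
        convert Real.volume_singleton (a := T - τ) using 2
        ext x; simp
      filter_upwards [ae_restrict_mem measurableSet_Ioc, ae_restrict_of_ae hne']
        with t ht htne
      have ht2 : t < T - τ := lt_of_le_of_ne ht.2 htne
      have hI0 : 0 ≤ ∫ s in Set.Ioc 0 t, f s := integral_nonneg fun s => norm_nonneg _
      have hSb : S t ≤ ∫ s in Set.Ioc 0 t, f s := by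
        haveI := hne t
        refine ciSup_le ?_
        rintro ⟨s, hs⟩
        rcases le_or_gt s 0 with h0 | h0
        · rw [hΓ0 s ⟨by linarith [hs.1, ht.1], h0⟩, norm_zero]; exact hI0
        · refine le_trans (hΓ1 s ⟨h0.le, lt_of_le_of_lt hs.2 ht2⟩) ?_
          rw [intervalIntegral.integral_of_le h0.le]
          exact hmono s t h0 hs.2 ht2.le
      have hCS : (∫ s in Set.Ioc 0 t, f s) ^ 2 ≤ t * ∫ s in Set.Ioc 0 t, f s ^ 2 :=
        cs_aux ht.1.le (fun s => norm_nonneg _) hfm.restrict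
          (hφ2.mono_set (Set.Ioc_subset_Ioc_right ht2.le))
      have hA2 : (∫ s in Set.Ioc 0 t, f s ^ 2) ≤ ∫ s in Set.Ioc 0 (T - τ), f s ^ 2 :=
        setIntegral_mono_set hφ2 (Filter.Eventually.of_forall fun s => sq_nonneg _)
          (HasSubset.Subset.eventuallyLE (Set.Ioc_subset_Ioc_right ht2.le))
      have hSt0 : 0 ≤ S t := hS0 t ht.1.le (by linarith)
      calc S t ^ 2 ≤ (∫ s in Set.Ioc 0 t, f s) ^ 2 := pow_le_pow_left₀ hSt0 hSb 2
        _ ≤ t * ∫ s in Set.Ioc 0 t, f s ^ 2 := hCS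
        _ ≤ t * A := by rw [hAeq]; exact mul_le_mul_of_nonneg_left hA2 ht.1.le
    calc (∫ t in (0:ℝ)..(T - τ), S t ^ 2) = ∫ t in Set.Ioc 0 (T - τ), S t ^ 2 :=
        intervalIntegral.integral_of_le hT0.le
      _ ≤ ∫ t in Set.Ioc 0 (T - τ), t * A := by
          refine integral_mono_ae (hSsq_int 0 (T - τ) le_rfl hT0.le (by linarith)) ?_ hae
          exact (continuous_id.mul continuous_const).integrableOn_Ioc
      _ = (∫ t in (0:ℝ)..(T - τ), t * A) := (intervalIntegral.integral_of_le hT0.le).symm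
      _ = (∫ t in (0:ℝ)..(T - τ), t) * A := by rw [intervalIntegral.integral_mul_const]
      _ = (T - τ) ^ 2 / 2 * A := by rw [integral_id]; ring
  -- Estimate 2
  have est2 : (∫ t in (T - τ)..T, S t ^ 2) ≤ τ * max ((T - τ) * A) (Cη ^ 2) := by
    have hpt : ∀ t ∈ Set.Icc (T - τ) T, S t ^ 2 ≤ max ((T - τ) * A) (Cη ^ 2) := by
      intro t ht
      have h1 : 0 ≤ t := le_trans hT0.le ht.1
      have hSb := hSle t h1 ht.2
      have hSt0 := hS0 t h1 ht.2
      rcases le_total B Cη with hc | hc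
      · rw [max_eq_right hc] at hSb
        exact le_max_of_le_right (pow_le_pow_left₀ hSt0 hSb 2)
      · rw [max_eq_left hc] at hSb
        exact le_max_of_le_left ((pow_le_pow_left₀ hSt0 hSb 2).trans hB2)
    calc (∫ t in (T - τ)..T, S t ^ 2)
        ≤ ∫ _t in (T - τ)..T, max ((T - τ) * A) (Cη ^ 2) := by
          refine intervalIntegral.integral_mono_on (by linarith) hint2
            intervalIntegrable_const hpt
      _ = τ * max ((T - τ) * A) (Cη ^ 2) := by
          rw [intervalIntegral.integral_const, smul_eq_mul]; ring_nf
  linarith [est1, est2]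
end

section
/- Let H be a complex Hilbert space and A a bounded self-adjoint operator on H whose spectrum is contained in [λ₀, ∞) for some λ₀ > 0. Fix T > 0, e ∈ H, γ ∈ [0, 2), and α ∈ [0, 1], and define Γ(r) = (r/T) e^{-(T−r)A} e for r ∈ [0,T]. Then ∫₀^T ‖A^{1/2} Γ(r)‖² · ‖A^{α/2} Γ(r)‖^{2/(2−γ)} dr ≤ (√(2−γ)/4) · ‖A^{1/4} e‖² · ‖A^{(2α+γ−2)/4} e‖^{2/(2−γ)}. -/
open MeasureTheory

section Stmt12Aux

variable {H : Type*} [NormedAddCommGroup H] [InnerProductSpace ℂ H] [CompleteSpace H]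

/-- The positive functional `f ↦ re ⟪e, cfc f A e⟫`. -/
noncomputable def phiF (A : H →L[ℂ] H) (e : H) (f : ℝ → ℝ) : ℝ :=
  Complex.re (inner ℂ e (cfc f A e))

variable (A : H →L[ℂ] H)

lemma phiF_nonneg (e : H) {f : ℝ → ℝ} (hf : ∀ x ∈ spectrum ℝ A, 0 ≤ f x) : 0 ≤ phiF A e f :=
  (Complex.le_def.mp
    (((ContinuousLinearMap.nonneg_iff_isPositive _).mp (cfc_nonneg hf)).inner_nonneg_right e)).1

lemma phiF_congr (e : H) {f g : ℝ → ℝ} (h : (spectrum ℝ A).EqOn f g) :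
    phiF A e f = phiF A e g := by
  unfold phiF; rw [cfc_congr h]

lemma phiF_sub_eq (e : H) {f g : ℝ → ℝ} (hf : ContinuousOn f (spectrum ℝ A))
    (hg : ContinuousOn g (spectrum ℝ A)) :
    phiF A e (fun x => f x - g x) = phiF A e f - phiF A e g := by
  unfold phiF
  rw [cfc_sub f g A hf hg]
  simp [inner_sub_right]

lemma phiF_mono (e : H) {f g : ℝ → ℝ} (hf : ContinuousOn f (spectrum ℝ A))
    (hg : ContinuousOn g (spectrum ℝ A)) (h : ∀ x ∈ spectrum ℝ A, f x ≤ g x) :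
    phiF A e f ≤ phiF A e g := by
  have h0 : 0 ≤ phiF A e (fun x => g x - f x) :=
    phiF_nonneg A e fun x hx => sub_nonneg.mpr (h x hx)
  rw [phiF_sub_eq A e hg hf] at h0
  linarith

lemma phiF_const_mul (e : H) (c : ℝ) {f : ℝ → ℝ} (hf : ContinuousOn f (spectrum ℝ A)) :
    phiF A e (fun x => c * f x) = c * phiF A e f := by
  unfold phiF
  rw [cfc_const_mul c f A hf]
  rw [ContinuousLinearMap.smul_apply, RCLike.real_smul_eq_coe_smul (K := ℂ), inner_smul_right]
  simp [Complex.mul_re]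

lemma phiF_norm_sq (e : H) {f : ℝ → ℝ} (hf : ContinuousOn f (spectrum ℝ A)) :
    ‖cfc f A e‖ ^ 2 = phiF A e (fun x => f x * f x) := by
  have h1 : IsSelfAdjoint (cfc f A) := cfc_predicate f A
  have h2 : (inner ℂ (cfc f A e) (cfc f A e) : ℂ) = inner ℂ e (cfc f A (cfc f A e)) := by
    rw [← ContinuousLinearMap.adjoint_inner_right, h1.adjoint_eq]
  have h3 : cfc f A (cfc f A e) = cfc (fun x => f x * f x) A e := by
    rw [cfc_mul f f A hf hf]; rfl
  have h4 : Complex.re (inner ℂ (cfc f A e) (cfc f A e)) = ‖cfc f A e‖ ^ 2 := by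
    exact_mod_cast inner_self_eq_norm_sq (𝕜 := ℂ) (cfc f A e)
  unfold phiF
  rw [← h3, ← h2, h4]

/-- Hölder interpolation for the functional `phiF`. -/
lemma phiF_holder (e : H) (hA : IsSelfAdjoint A) {f g : ℝ → ℝ} {θ : ℝ} (hθ : 0 < θ)
    (hθ1 : θ ≤ 1)
    (hf : ContinuousOn f (spectrum ℝ A)) (hg : ContinuousOn g (spectrum ℝ A))
    (hf0 : ∀ x ∈ spectrum ℝ A, 0 ≤ f x) (hg0 : ∀ x ∈ spectrum ℝ A, 0 ≤ g x) :
    phiF A e (fun x => f x ^ (1 - θ) * g x ^ θ) ≤ phiF A e f ^ (1 - θ) * phiF A e g ^ θ := by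
  rcases eq_or_lt_of_le hθ1 with rfl | hθ1
  · simp only [sub_self, Real.rpow_zero, Real.rpow_one, one_mul]
    exact le_of_eq rfl
  have h1θ : 0 < 1 - θ := by linarith
  have hfc : ContinuousOn (fun x => f x ^ (1 - θ)) (spectrum ℝ A) :=
    hf.rpow_const fun x hx => Or.inr h1θ.le
  have hgc : ContinuousOn (fun x => g x ^ θ) (spectrum ℝ A) :=
    hg.rpow_const fun x hx => Or.inr hθ.le
  have hprodc : ContinuousOn (fun x => f x ^ (1 - θ) * g x ^ θ) (spectrum ℝ A) := hfc.mul hgc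
  have hprod0 : ∀ x ∈ spectrum ℝ A, 0 ≤ f x ^ (1 - θ) * g x ^ θ := fun x hx =>
    mul_nonneg (Real.rpow_nonneg (hf0 x hx) _) (Real.rpow_nonneg (hg0 x hx) _)
  set P := phiF A e (fun x => f x ^ (1 - θ) * g x ^ θ) with hP
  have hP0 : 0 ≤ P := phiF_nonneg A e hprod0
  set F := phiF A e f with hF
  set G := phiF A e g with hG
  have hF0 : 0 ≤ F := phiF_nonneg A e hf0
  have hG0 : 0 ≤ G := phiF_nonneg A e hg0
  have key : ∀ u v : ℝ, 0 ≤ u → 0 ≤ v →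
      P * (u ^ (1 - θ) * v ^ θ) ≤ (1 - θ) * (u * F) + θ * (v * G) := by
    intro u v hu hv
    have hstep : phiF A e (fun x => (u * f x) ^ (1 - θ) * (v * g x) ^ θ) ≤
        phiF A e (fun x => (1 - θ) * (u * f x) + θ * (v * g x)) := by
      refine phiF_mono A e ?_ ?_ ?_
      · exact ((continuousOn_const.mul hf).rpow_const fun x hx => Or.inr h1θ.le).mul
          ((continuousOn_const.mul hg).rpow_const fun x hx => Or.inr hθ.le)
      · exact (continuousOn_const.mul (continuousOn_const.mul hf)).add
          (continuousOn_const.mul (continuousOn_const.mul hg))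
      · intro x hx
        exact Real.geom_mean_le_arith_mean2_weighted h1θ.le hθ.le
          (mul_nonneg hu (hf0 x hx)) (mul_nonneg hv (hg0 x hx)) (by ring)
    have hL : phiF A e (fun x => (u * f x) ^ (1 - θ) * (v * g x) ^ θ) =
        P * (u ^ (1 - θ) * v ^ θ) := by
      rw [phiF_congr A e (g := fun x => (u ^ (1 - θ) * v ^ θ) * (f x ^ (1 - θ) * g x ^ θ))
        (fun x hx => by
          simp only
          rw [Real.mul_rpow hu (hf0 x hx), Real.mul_rpow hv (hg0 x hx)]; ring),
        phiF_const_mul A e _ hprodc]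
      rw [← hP]; ring
    have hR : phiF A e (fun x => (1 - θ) * (u * f x) + θ * (v * g x)) =
        (1 - θ) * (u * F) + θ * (v * G) := by
      unfold phiF
      rw [cfc_add A (fun x => (1 - θ) * (u * f x)) (fun x => θ * (v * g x)) (continuousOn_const.mul (continuousOn_const.mul hf))
        (continuousOn_const.mul (continuousOn_const.mul hg))]
      rw [show (fun x => (1 - θ) * (u * f x)) = (fun x => ((1 - θ) * u) * f x) from by
        funext x; ring]
      rw [show (fun x => θ * (v * g x)) = (fun x => (θ * v) * g x) from by funext x; ring]
      rw [cfc_const_mul _ f A hf, cfc_const_mul _ g A hg]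
      rw [ContinuousLinearMap.add_apply, inner_add_right]
      rw [ContinuousLinearMap.smul_apply, ContinuousLinearMap.smul_apply,
        RCLike.real_smul_eq_coe_smul (K := ℂ), RCLike.real_smul_eq_coe_smul (K := ℂ),
        inner_smul_right, inner_smul_right]
      rw [hF, hG]
      unfold phiF
      simp [Complex.mul_re]
      ring
    rw [hL, hR] at hstep
    exact hstep
  rcases eq_or_lt_of_le hF0 with hFz | hFpos
  · have hPz : P ≤ 0 := by
      by_contra hPc
      push_neg at hPc
      set u := ((θ * G + 1) / P) ^ (1 - θ)⁻¹ with hu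
      have hGpos : 0 < θ * G + 1 := by positivity
      have hu0 : 0 ≤ u := Real.rpow_nonneg (by positivity) _
      have huv : u ^ (1 - θ) = (θ * G + 1) / P := by
        rw [hu, Real.rpow_inv_rpow (by positivity) h1θ.ne']
      have := key u 1 hu0 zero_le_one
      rw [huv, ← hFz, Real.one_rpow] at this
      simp only [mul_zero, mul_one, zero_add, one_mul] at this
      rw [mul_comm, div_mul_cancel₀ _ hPc.ne'] at this
      linarith
    have : P = 0 := le_antisymm hPz hP0
    rw [this, ← hFz, Real.zero_rpow h1θ.ne']
    positivity
  rcases eq_or_lt_of_le hG0 with hGz | hGpos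
  · have hPz : P ≤ 0 := by
      by_contra hPc
      push_neg at hPc
      set v := (((1 - θ) * F + 1) / P) ^ θ⁻¹ with hv
      have hv0 : 0 ≤ v := Real.rpow_nonneg (by positivity) _
      have hvv : v ^ θ = ((1 - θ) * F + 1) / P := by
        rw [hv, Real.rpow_inv_rpow (by positivity) hθ.ne']
      have := key 1 v zero_le_one hv0
      rw [hvv, ← hGz, Real.one_rpow] at this
      simp only [mul_zero, mul_one, add_zero, one_mul] at this
      rw [mul_comm, div_mul_cancel₀ _ hPc.ne'] at this
      linarith
    have : P = 0 := le_antisymm hPz hP0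
    rw [this, ← hGz, Real.zero_rpow hθ.ne']
    positivity
  · have h1 := key F⁻¹ G⁻¹ (by positivity) (by positivity)
    rw [inv_mul_cancel₀ hFpos.ne', inv_mul_cancel₀ hGpos.ne'] at h1
    rw [Real.inv_rpow hF0, Real.inv_rpow hG0] at h1
    have h2 : P * ((F ^ (1 - θ))⁻¹ * (G ^ θ)⁻¹) ≤ 1 := by
      convert h1 using 1; ring
    have hFp : 0 < F ^ (1 - θ) := Real.rpow_pos_of_pos hFpos _
    have hGp : 0 < G ^ θ := Real.rpow_pos_of_pos hGpos _
    calc P = (P * ((F ^ (1 - θ))⁻¹ * (G ^ θ)⁻¹)) * (F ^ (1 - θ) * G ^ θ) := by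
          field_simp
      _ ≤ 1 * (F ^ (1 - θ) * G ^ θ) :=
          mul_le_mul_of_nonneg_right h2 (by positivity)
      _ = F ^ (1 - θ) * G ^ θ := one_mul _

noncomputable def Lfun (hA : IsSelfAdjoint A) (e : H) : C(spectrum ℝ A, ℝ) →L[ℝ] ℝ :=
  (Complex.reCLM.comp ((innerSL ℂ e).restrictScalars ℝ)).comp
    (((ContinuousLinearMap.apply ℂ H e).restrictScalars ℝ).comp (cfcL hA))

lemma Lfun_nonneg (hA : IsSelfAdjoint A) (e : H) (k : C(spectrum ℝ A, ℝ)) (hk : ∀ x, 0 ≤ k x) :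
    0 ≤ Lfun A hA e k := by
  set j : C(spectrum ℝ A, ℝ) := ⟨fun x => Real.sqrt (k x), Real.continuous_sqrt.comp k.continuous⟩
  have hkj : k = star j * j := by
    ext x
    simp [j, Real.mul_self_sqrt (hk x)]
  have hpos : 0 ≤ cfcHom hA (R := ℝ) k := by
    rw [hkj, map_mul, map_star]
    exact star_mul_self_nonneg _
  exact (Complex.le_def.mp
    (((ContinuousLinearMap.nonneg_iff_isPositive _).mp hpos).inner_nonneg_right e)).1

lemma Lfun_mono (hA : IsSelfAdjoint A) (e : H) (k1 k2 : C(spectrum ℝ A, ℝ))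
    (h : ∀ x, k1 x ≤ k2 x) : Lfun A hA e k1 ≤ Lfun A hA e k2 := by
  have h0 : 0 ≤ Lfun A hA e (k2 - k1) :=
    Lfun_nonneg A hA e _ fun x => by simpa using sub_nonneg.mpr (h x)
  rw [map_sub] at h0
  linarith

lemma exists_fam {lam : ℝ} (q : ℝ) (b : ℝ → ℝ) (hb : Continuous b) (hlam : 0 < lam)
    (hσ : spectrum ℝ A ⊆ Set.Ici lam) :
    ∃ χ : C(ℝ, C(spectrum ℝ A, ℝ)),
      ∀ (s : ℝ) (x : spectrum ℝ A), χ s x = (x : ℝ) ^ q * Real.exp (b s * x) := by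
  have hx : ∀ p : ℝ × spectrum ℝ A, ((p.2 : ℝ)) ≠ 0 :=
    fun p => (lt_of_lt_of_le hlam (hσ p.2.2)).ne'
  refine ⟨ContinuousMap.curry ⟨fun p : ℝ × spectrum ℝ A =>
    (p.2 : ℝ) ^ q * Real.exp (b p.1 * p.2), ?_⟩, fun s x => rfl⟩
  refine Continuous.mul ?_ ?_
  · exact (continuous_subtype_val.comp continuous_snd).rpow_const fun p => Or.inl (hx p)
  · exact Real.continuous_exp.comp
      ((hb.comp continuous_fst).mul (continuous_subtype_val.comp continuous_snd))

lemma phiF_eq_Lfun (hA : IsSelfAdjoint A) (e : H) {f : ℝ → ℝ}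
    (hf : ContinuousOn f (spectrum ℝ A))
    (k : C(spectrum ℝ A, ℝ)) (hk : ∀ x : spectrum ℝ A, k x = f x) :
    phiF A e f = Lfun A hA e k := by
  have hkey : k = ⟨(spectrum ℝ A).restrict f, hf.restrict⟩ := ContinuousMap.ext hk
  unfold phiF
  rw [cfc_eq_cfcL hA hf, hkey]
  rfl

lemma scalar_exp_int {y c T q : ℝ} (hy : 0 < y) (hc : 0 < c) (hT : 0 ≤ T) :
    ∫ s in Set.Ioc (0:ℝ) T, y ^ q * Real.exp (-(c * s) * y) ≤ y ^ (q - 1) / c := by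
  rw [← intervalIntegral.integral_of_le hT]
  have hD : ∀ s ∈ Set.uIcc (0:ℝ) T,
      HasDerivAt (fun s => -(y ^ (q - 1) / c) * Real.exp (-(c * s) * y))
        (y ^ q * Real.exp (-(c * s) * y)) s := by
    intro s _
    have h1 : HasDerivAt (fun s : ℝ => -(c * s) * y) (-(c * y)) s := by
      have heq : (fun s : ℝ => -(c * s) * y) = (fun s : ℝ => (-(c * y)) * s) := by
        funext t; ring
      rw [heq]
      simpa using (hasDerivAt_id s).const_mul (-(c * y))
    have h2 := ((Real.hasDerivAt_exp (-(c * s) * y)).comp s h1).const_mul (-(y ^ (q - 1) / c))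
    refine h2.congr_deriv ?_
    rw [show q = q - 1 + 1 by ring, Real.rpow_add_one hy.ne']
    field_simp
    ring
  have hInt : IntervalIntegrable (fun s => y ^ q * Real.exp (-(c * s) * y)) MeasureTheory.volume
      0 T := by
    apply Continuous.intervalIntegrable
    continuity
  rw [intervalIntegral.integral_eq_sub_of_hasDerivAt hD hInt]
  have h3 : 0 ≤ Real.exp (-(c * T) * y) := (Real.exp_pos _).le
  have h5 : Real.exp (-(c * 0) * y) = 1 := by norm_num
  rw [h5]
  have h6 : 0 ≤ y ^ (q - 1) / c := by positivity
  nlinarith [mul_nonneg h6 h3]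

lemma phiF_exp_integral (hA : IsSelfAdjoint A) (e : H) {lam : ℝ} (hlam : 0 < lam)
    (hσ : spectrum ℝ A ⊆ Set.Ici lam)
    (q c T : ℝ) (hc : 0 < c) (hT : 0 ≤ T) :
    ∫ s in (0:ℝ)..T, phiF A e (fun x => x ^ q * Real.exp (-(c * s) * x)) ≤
      phiF A e (fun x => x ^ (q - 1)) / c := by
  obtain ⟨χ, hχ⟩ := exists_fam A (q := q) (b := fun s => -(c * s)) (by continuity) hlam hσ
  have hxne : ∀ x : spectrum ℝ A, ((x : ℝ)) ≠ 0 := fun x => (lt_of_lt_of_le hlam (hσ x.2)).ne'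
  have hcf : ∀ s : ℝ, ContinuousOn (fun x : ℝ => x ^ q * Real.exp (-(c * s) * x))
      (spectrum ℝ A) := by
    intro s
    refine ContinuousOn.mul ?_ ?_
    · exact continuousOn_id.rpow_const fun x hx => Or.inl (lt_of_lt_of_le hlam (hσ hx)).ne'
    · exact (Real.continuous_exp.comp (continuous_const.mul continuous_id)).continuousOn
  have h1 : ∀ s : ℝ, phiF A e (fun x => x ^ q * Real.exp (-(c * s) * x)) =
      Lfun A hA e (χ s) := fun s => phiF_eq_Lfun A hA e (hcf s) (χ s) (hχ s)
  rw [intervalIntegral.integral_congr (g := fun s => Lfun A hA e (χ s)) (fun s _ => h1 s)]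
  rw [intervalIntegral.integral_of_le hT]
  have hint : MeasureTheory.IntegrableOn (fun s => χ s) (Set.Ioc 0 T) MeasureTheory.volume :=
    (χ.continuous.continuousOn.integrableOn_compact isCompact_Icc).mono_set
      Set.Ioc_subset_Icc_self
  rw [ContinuousLinearMap.integral_comp_comm _ hint]
  set I := ∫ s in Set.Ioc (0:ℝ) T, χ s with hI
  have hk2cont : Continuous fun x : spectrum ℝ A => (x : ℝ) ^ (q - 1) / c := by
    apply Continuous.div_const
    exact continuous_subtype_val.rpow_const fun x => Or.inl (hxne x)
  set k2 : C(spectrum ℝ A, ℝ) := ⟨fun x => (x : ℝ) ^ (q - 1) / c, hk2cont⟩ with hk2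
  have hIk2 : ∀ x : spectrum ℝ A, I x ≤ k2 x := by
    intro x
    have happ : I x = ∫ s in Set.Ioc (0:ℝ) T, (x : ℝ) ^ q * Real.exp (-(c * s) * (x : ℝ)) := by
      rw [hI, ContinuousMap.integral_apply hint x]
      exact MeasureTheory.setIntegral_congr_fun measurableSet_Ioc fun s _ => hχ s x
    rw [happ]
    exact scalar_exp_int (lt_of_lt_of_le hlam (hσ x.2)) hc hT
  refine le_trans (Lfun_mono A hA e I k2 hIk2) ?_
  have hcq1 : ContinuousOn (fun x : ℝ => x ^ (q - 1)) (spectrum ℝ A) :=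
    continuousOn_id.rpow_const fun x hx => Or.inl (lt_of_lt_of_le hlam (hσ hx)).ne'
  have hcq : ContinuousOn (fun x : ℝ => c⁻¹ * x ^ (q - 1)) (spectrum ℝ A) :=
    continuousOn_const.mul hcq1
  have hk2' : ∀ x : spectrum ℝ A, k2 x = c⁻¹ * (x : ℝ) ^ (q - 1) := fun x => by
    simp [hk2, div_eq_inv_mul]
  rw [← phiF_eq_Lfun A hA e hcq k2 hk2', phiF_const_mul A e c⁻¹ hcq1]
  rw [div_eq_inv_mul]

lemma young_sqrt {X Y t : ℝ} (hX : 0 ≤ X) (hY : 0 ≤ Y) (ht : 0 < t) :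
    X ^ (1/2 : ℝ) * Y ^ (1/2 : ℝ) ≤ (t * X + Y / t) / 2 := by
  rw [← Real.sqrt_eq_rpow, ← Real.sqrt_eq_rpow]
  have h1 : Real.sqrt X * Real.sqrt Y = Real.sqrt (t * X) * Real.sqrt (Y / t) := by
    rw [← Real.sqrt_mul (by positivity), ← Real.sqrt_mul (by positivity)]
    congr 1
    field_simp
  rw [h1]
  nlinarith [sq_nonneg (Real.sqrt (t * X) - Real.sqrt (Y / t)),
    Real.sq_sqrt (mul_nonneg ht.le hX), Real.sq_sqrt (div_nonneg hY ht.le),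
    Real.sqrt_nonneg (t * X), Real.sqrt_nonneg (Y / t)]

end Stmt12Aux


set_option maxHeartbeats 2000000 in
/-- For `A` self-adjoint with spectrum in `[λ₀, ∞)`, `λ₀ > 0`,
`Γ(r) = (r/T) e^{-(T-r)A} e`, `γ ∈ [0,2)`, `α ∈ [0,1]`:
`∫₀^T ‖A^{1/2}Γ(r)‖² ‖A^{α/2}Γ(r)‖^{2/(2-γ)} dr
  ≤ (√(2-γ)/4) ‖A^{1/4}e‖² ‖A^{(2α+γ-2)/4} e‖^{2/(2-γ)}`. -/
theorem stmt12
    {H : Type*} [NormedAddCommGroup H] [InnerProductSpace ℂ H] [CompleteSpace H]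
    (A : H →L[ℂ] H) (hA : IsSelfAdjoint A)
    (lam : ℝ) (hlam : 0 < lam) (hspec : ∀ z ∈ spectrum ℂ A, lam ≤ z.re)
    (T : ℝ) (hT : 0 < T) (e : H)
    (γ α : ℝ) (hγ : γ ∈ Set.Ico (0:ℝ) 2) (hα : α ∈ Set.Icc (0:ℝ) 1)
    (Γ : ℝ → H)
    (hΓ : ∀ r, Γ r = (r / T) • (NormedSpace.exp ((-(T - r)) • A)) e) :
    (∫ r in (0:ℝ)..T,
        ‖fracPow A (1/2) (Γ r)‖ ^ 2 * ‖fracPow A (α / 2) (Γ r)‖ ^ ((2:ℝ) / (2 - γ))) ≤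
      Real.sqrt (2 - γ) / 4 * ‖fracPow A (1/4) e‖ ^ 2 *
        ‖fracPow A ((2 * α + γ - 2) / 4) e‖ ^ ((2:ℝ) / (2 - γ)) := by
  obtain ⟨hγ0, hγ2⟩ := hγ
  obtain ⟨hα0, hα1⟩ := hα
  have h2γ : (0:ℝ) < 2 - γ := by linarith
  have hσ : spectrum ℝ A ⊆ Set.Ici lam := by
    intro x hx
    have hmem : (algebraMap ℝ ℂ x) ∈ spectrum ℂ A := spectrum.algebraMap_mem ℂ hx
    simpa using hspec _ hmem
  have hxpos : ∀ x ∈ spectrum ℝ A, (0:ℝ) < x := fun x hx => lt_of_lt_of_le hlam (hσ hx)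
  have hxne : ∀ x ∈ spectrum ℝ A, x ≠ 0 := fun x hx => (hxpos x hx).ne'
  have hrp : ∀ a : ℝ, ContinuousOn (fun x : ℝ => x ^ a) (spectrum ℝ A) := fun a =>
    continuousOn_id.rpow_const fun x hx => Or.inl (hxne x hx)
  have hex : ∀ c : ℝ, ContinuousOn (fun x : ℝ => Real.exp (c * x)) (spectrum ℝ A) := fun c =>
    (Real.continuous_exp.comp (continuous_const.mul continuous_id)).continuousOn
  have hrpe : ∀ a c : ℝ, ContinuousOn (fun x : ℝ => x ^ a * Real.exp (c * x)) (spectrum ℝ A) :=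
    fun a c => (hrp a).mul (hex c)
  by_cases he : e = 0
  · subst he
    have hΓ0 : ∀ r, Γ r = 0 := fun r => by rw [hΓ r, map_zero, smul_zero]
    have hL : ∀ r, ‖fracPow A (1/2) (Γ r)‖ ^ 2 *
        ‖fracPow A (α / 2) (Γ r)‖ ^ ((2:ℝ) / (2 - γ)) = 0 := by
      intro r
      rw [hΓ0 r, map_zero, norm_zero]
      simp
    rw [intervalIntegral.integral_congr (g := fun _ => (0:ℝ)) (fun r _ => hL r)]
    rw [intervalIntegral.integral_const]
    simp only [map_zero, norm_zero, smul_zero]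
    positivity
  -- main case
  set θ : ℝ := (2 - γ) / 2 with hθdef
  set β : ℝ := 1 / (2 - γ) with hβdef
  set m : ℝ := (2 * α + γ - 2) / 2 with hmdef
  have hθpos : 0 < θ := by rw [hθdef]; positivity
  have hθ1 : θ ≤ 1 := by rw [hθdef]; linarith
  have hβpos : 0 < β := by rw [hβdef]; positivity
  have hθβ : θ * β = 1/2 := by rw [hθdef, hβdef]; field_simp
  set N := phiF A e (fun x => x ^ (1/2 : ℝ)) with hNdef
  set K := phiF A e (fun x => x ^ m) with hKdef
  set Xf : ℝ → ℝ := fun s => phiF A e (fun x => x ^ (3/2 : ℝ) * Real.exp (-(4 * s) * x))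
    with hXdef
  set Yf : ℝ → ℝ := fun s => phiF A e (fun x => x ^ (m + 1) * Real.exp (-(4 / (2 - γ) * s) * x))
    with hYdef
  have hN0 : 0 ≤ N := phiF_nonneg A e fun x hx => Real.rpow_nonneg (hxpos x hx).le _
  have hK0 : 0 ≤ K := phiF_nonneg A e fun x hx => Real.rpow_nonneg (hxpos x hx).le _
  have hX0 : ∀ s, 0 ≤ Xf s := fun s => phiF_nonneg A e fun x hx =>
    mul_nonneg (Real.rpow_nonneg (hxpos x hx).le _) (Real.exp_pos _).le
  have hY0 : ∀ s, 0 ≤ Yf s := fun s => phiF_nonneg A e fun x hx =>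
    mul_nonneg (Real.rpow_nonneg (hxpos x hx).le _) (Real.exp_pos _).le
  -- nonvanishing of fractional powers of e
  have hinv : ∀ a : ℝ, cfc (fun x : ℝ => x ^ a) A e ≠ 0 := by
    intro a hcontra
    have hee : cfc (fun x : ℝ => x ^ (-a)) A (cfc (fun x : ℝ => x ^ a) A e) = e := by
      rw [← ContinuousLinearMap.mul_apply, ← cfc_mul _ _ A (hrp (-a)) (hrp a)]
      have heq : (spectrum ℝ A).EqOn (fun x => x ^ (-a) * x ^ a) (fun _ => (1:ℝ)) := by
        intro x hx
        simp only
        rw [← Real.rpow_add (hxpos x hx)]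
        norm_num
      rw [cfc_congr heq]
      have hone : cfc (fun _ : ℝ => (1:ℝ)) A = 1 := cfc_one ℝ A
      rw [hone, ContinuousLinearMap.one_apply]
    rw [hcontra, map_zero] at hee
    exact he hee.symm
  -- identities for the norms of e
  have hNe : ‖fracPow A (1/4) e‖ ^ 2 = N := by
    rw [fracPow, phiF_norm_sq A e (hrp (1/4)), hNdef]
    apply phiF_congr
    intro x hx
    have hx0 : (0:ℝ) < x := hxpos x hx
    simp only [Real.rpow_def_of_pos hx0, ← Real.exp_add]
    rw [Real.exp_eq_exp]; ring
  have hKe : ‖fracPow A ((2 * α + γ - 2) / 4) e‖ ^ 2 = K := by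
    rw [fracPow, phiF_norm_sq A e (hrp _), hKdef]
    apply phiF_congr
    intro x hx
    have hx0 : (0:ℝ) < x := hxpos x hx
    simp only [Real.rpow_def_of_pos hx0, ← Real.exp_add]
    rw [Real.exp_eq_exp, hmdef]; ring
  have hNpos : 0 < N := by
    rw [← hNe]
    have h0 : fracPow A (1/4) e ≠ 0 := by rw [fracPow]; exact hinv _
    exact pow_pos (norm_pos_iff.mpr h0) 2
  have hKpos : 0 < K := by
    rw [← hKe]
    have h0 : fracPow A ((2 * α + γ - 2) / 4) e ≠ 0 := by rw [fracPow]; exact hinv _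
    exact pow_pos (norm_pos_iff.mpr h0) 2
  -- the basic identity for Γ
  have hfrac : ∀ (a r : ℝ), fracPow A a (Γ r) =
      (r / T) • cfc (fun x => x ^ a * Real.exp (-(T - r) * x)) A e := by
    intro a r
    rw [hΓ r]
    have hsa : IsSelfAdjoint ((-(T - r)) • A) := by
      rw [IsSelfAdjoint, star_smul, star_trivial, hA.star_eq]
    have hexp : NormedSpace.exp ((-(T - r)) • A) =
        cfc (fun x : ℝ => Real.exp (-(T - r) * x)) A := by
      rw [cfc_comp_const_mul (-(T - r)) Real.exp A, CFC.real_exp_eq_normedSpace_exp hsa]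
    rw [hexp, fracPow, ContinuousLinearMap.map_smul_of_tower]
    congr 1
    rw [← ContinuousLinearMap.mul_apply, ← cfc_mul _ _ A (hrp a) (hex (-(T - r)))]
  -- squared norm identities for Γ
  have hnorm1 : ∀ r ∈ Set.Icc (0:ℝ) T, ‖fracPow A (1/2) (Γ r)‖ ^ 2 =
      (r/T)^2 * phiF A e (fun x => x ^ (1:ℝ) * Real.exp (-(2 * (T - r)) * x)) := by
    intro r hr
    rw [hfrac (1/2) r, norm_smul, mul_pow, Real.norm_eq_abs,
      abs_of_nonneg (div_nonneg hr.1 hT.le), phiF_norm_sq A e (hrpe (1/2) (-(T - r)))]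
    congr 1
    apply phiF_congr
    intro x hx
    have hx0 : (0:ℝ) < x := hxpos x hx
    simp only [Real.rpow_def_of_pos hx0, ← Real.exp_add]
    rw [Real.exp_eq_exp]; ring
  have hnorm2 : ∀ r ∈ Set.Icc (0:ℝ) T, ‖fracPow A (α / 2) (Γ r)‖ ^ 2 =
      (r/T)^2 * phiF A e (fun x => x ^ α * Real.exp (-(2 * (T - r)) * x)) := by
    intro r hr
    rw [hfrac (α/2) r, norm_smul, mul_pow, Real.norm_eq_abs,
      abs_of_nonneg (div_nonneg hr.1 hT.le), phiF_norm_sq A e (hrpe (α/2) (-(T - r)))]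
    congr 1
    apply phiF_congr
    intro x hx
    have hx0 : (0:ℝ) < x := hxpos x hx
    simp only [Real.rpow_def_of_pos hx0, ← Real.exp_add]
    rw [Real.exp_eq_exp]; ring
  -- Hölder bounds
  have hFb : ∀ s : ℝ, phiF A e (fun x => x ^ (1:ℝ) * Real.exp (-(2 * s) * x)) ≤
      N ^ (1/2 : ℝ) * (Xf s) ^ (1/2 : ℝ) := by
    intro s
    have h := phiF_holder A e hA (θ := 1/2) (by norm_num) (by norm_num)
      (hrp (1/2)) (hrpe (3/2) (-(4 * s)))
      (fun x hx => Real.rpow_nonneg (hxpos x hx).le _)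
      (fun x hx => mul_nonneg (Real.rpow_nonneg (hxpos x hx).le _) (Real.exp_pos _).le)
    rw [show (1:ℝ) - 1/2 = 1/2 by norm_num] at h
    refine le_trans (le_of_eq ?_) h
    apply phiF_congr
    intro x hx
    have hx0 : (0:ℝ) < x := hxpos x hx
    simp only [Real.rpow_def_of_pos hx0, ← Real.exp_mul, ← Real.exp_add,
      Real.mul_rpow (Real.exp_pos _).le (Real.exp_pos _).le]
    rw [Real.exp_eq_exp]; ring
  have hGb : ∀ s : ℝ, phiF A e (fun x => x ^ α * Real.exp (-(2 * s) * x)) ≤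
      K ^ (1 - θ) * (Yf s) ^ θ := by
    intro s
    have h := phiF_holder A e hA (θ := θ) hθpos hθ1
      (hrp m) (hrpe (m + 1) (-(4 / (2 - γ) * s)))
      (fun x hx => Real.rpow_nonneg (hxpos x hx).le _)
      (fun x hx => mul_nonneg (Real.rpow_nonneg (hxpos x hx).le _) (Real.exp_pos _).le)
    refine le_trans (le_of_eq ?_) h
    apply phiF_congr
    intro x hx
    have hx0 : (0:ℝ) < x := hxpos x hx
    simp only [Real.rpow_def_of_pos hx0, ← Real.exp_mul, ← Real.exp_add,
      Real.mul_rpow (Real.exp_pos _).le (Real.exp_pos _).le]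
    rw [Real.exp_eq_exp, hθdef, hmdef]
    field_simp
    ring
  -- continuity machinery
  obtain ⟨χ1, hχ1⟩ := exists_fam A (q := (1/2 : ℝ)) (b := fun r => -(T - r)) ((continuous_const.sub continuous_id).neg)
    hlam hσ
  obtain ⟨χ2, hχ2⟩ := exists_fam A (q := α / 2) (b := fun r => -(T - r)) ((continuous_const.sub continuous_id).neg)
    hlam hσ
  obtain ⟨χX, hχX⟩ := exists_fam A (q := (3/2 : ℝ)) (b := fun s => -(4 * s)) ((continuous_const.mul continuous_id).neg)
    hlam hσ
  obtain ⟨χY, hχY⟩ := exists_fam A (q := m + 1) (b := fun s => -(4 / (2 - γ) * s))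
    ((continuous_const.mul continuous_id).neg) hlam hσ
  have hXeq : ∀ s, Xf s = Lfun A hA e (χX s) := fun s =>
    phiF_eq_Lfun A hA e (hrpe _ _) _ (hχX s)
  have hYeq : ∀ s, Yf s = Lfun A hA e (χY s) := fun s =>
    phiF_eq_Lfun A hA e (hrpe _ _) _ (hχY s)
  have hXcont : Continuous Xf := by
    rw [show Xf = fun s => Lfun A hA e (χX s) from funext hXeq]
    exact (Lfun A hA e).continuous.comp χX.continuous
  have hYcont : Continuous Yf := by
    rw [show Yf = fun s => Lfun A hA e (χY s) from funext hYeq]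
    exact (Lfun A hA e).continuous.comp χY.continuous
  have happly : ∀ (χ : C(ℝ, C(spectrum ℝ A, ℝ))),
      Continuous fun r => (cfcL (R := ℝ) hA (χ r)) e := by
    intro χ
    have h1 : Continuous fun r => cfcL (R := ℝ) hA (χ r) :=
      (cfcL (R := ℝ) hA).continuous.comp χ.continuous
    exact ((ContinuousLinearMap.apply ℂ H e).restrictScalars ℝ).continuous.comp h1
  have hfc : ∀ (a : ℝ) (χ : C(ℝ, C(spectrum ℝ A, ℝ)))
      (hχ : ∀ (r : ℝ) (x : spectrum ℝ A), χ r x = (x:ℝ) ^ a * Real.exp (-(T - r) * x)),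
      Continuous fun r => fracPow A a (Γ r) := by
    intro a χ hχ
    have heq : (fun r => fracPow A a (Γ r)) =
        fun r => (r / T) • ((cfcL (R := ℝ) hA (χ r)) e) := by
      funext r
      rw [hfrac a r, cfc_eq_cfcL hA (hrpe a (-(T - r)))]
      have hcm : (⟨_, (hrpe a (-(T - r))).restrict⟩ : C(spectrum ℝ A, ℝ)) = χ r :=
        ContinuousMap.ext fun x => (hχ r x).symm
      rw [hcm]
    rw [heq]
    exact (continuous_id.div_const T).smul (happly χ)
  have hfrac1cont : Continuous fun r => fracPow A (1/2) (Γ r) := hfc (1/2) χ1 hχ1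
  have hfrac2cont : Continuous fun r => fracPow A (α / 2) (Γ r) := hfc (α/2) χ2 hχ2
  have hWcont : Continuous fun r => ‖fracPow A (1/2) (Γ r)‖ ^ 2 *
      ‖fracPow A (α / 2) (Γ r)‖ ^ ((2:ℝ) / (2 - γ)) := by
    apply Continuous.mul
    · exact hfrac1cont.norm.pow 2
    · exact hfrac2cont.norm.rpow_const fun r => Or.inr (by positivity)
  set C0 := N ^ (1/2 : ℝ) * K ^ ((1 - θ) * β) with hC0def
  have hC00 : 0 ≤ C0 := by positivity
  set B : ℝ → ℝ := fun u => (Xf u) ^ (1/2 : ℝ) * (Yf u) ^ (1/2 : ℝ) with hBdef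
  have hBcont : Continuous B :=
    (hXcont.rpow_const fun u => Or.inr (by norm_num)).mul
      (hYcont.rpow_const fun u => Or.inr (by norm_num))
  have hB0 : ∀ u, 0 ≤ B u := fun u =>
    mul_nonneg (Real.rpow_nonneg (hX0 u) _) (Real.rpow_nonneg (hY0 u) _)
  -- pointwise bound
  have hpt : ∀ r ∈ Set.Icc (0:ℝ) T, ‖fracPow A (1/2) (Γ r)‖ ^ 2 *
      ‖fracPow A (α / 2) (Γ r)‖ ^ ((2:ℝ) / (2 - γ)) ≤ C0 * B (T - r) := by
    intro r hr
    have hrT0 : 0 ≤ r / T := div_nonneg hr.1 hT.le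
    have hrT1 : r / T ≤ 1 := (div_le_one hT).mpr hr.2
    have hrT2 : (r / T) ^ 2 ≤ 1 := pow_le_one₀ hrT0 hrT1
    set F := phiF A e (fun x => x ^ (1:ℝ) * Real.exp (-(2 * (T - r)) * x)) with hFdef
    set G := phiF A e (fun x => x ^ α * Real.exp (-(2 * (T - r)) * x)) with hGdef
    have hF0 : 0 ≤ F := phiF_nonneg A e fun x hx =>
      mul_nonneg (Real.rpow_nonneg (hxpos x hx).le _) (Real.exp_pos _).le
    have hG0 : 0 ≤ G := phiF_nonneg A e fun x hx =>
      mul_nonneg (Real.rpow_nonneg (hxpos x hx).le _) (Real.exp_pos _).le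
    have h2 : ‖fracPow A (α / 2) (Γ r)‖ ^ ((2:ℝ) / (2 - γ)) = ((r/T)^2 * G) ^ β := by
      have hcast : ‖fracPow A (α / 2) (Γ r)‖ ^ ((2:ℝ)) =
          ‖fracPow A (α / 2) (Γ r)‖ ^ (2:ℕ) := by
        rw [← Real.rpow_natCast _ 2]; norm_num
      rw [show (2:ℝ) / (2 - γ) = 2 * β by rw [hβdef]; ring]
      rw [Real.rpow_mul (norm_nonneg _), hcast, hnorm2 r hr]
    rw [hnorm1 r hr, h2]
    have hstep1 : ((r/T)^2 * F) * (((r/T)^2 * G) ^ β) ≤ F * G ^ β := by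
      apply mul_le_mul
      · exact mul_le_of_le_one_left hF0 hrT2
      · exact Real.rpow_le_rpow (by positivity) (mul_le_of_le_one_left hG0 hrT2) hβpos.le
      · positivity
      · exact hF0
    refine le_trans hstep1 ?_
    have hstep2 : F * G ^ β ≤ (N ^ (1/2:ℝ) * (Xf (T - r)) ^ (1/2:ℝ)) *
        ((K ^ (1 - θ) * (Yf (T - r)) ^ θ) ^ β) := by
      apply mul_le_mul (hFb (T - r))
      · exact Real.rpow_le_rpow hG0 (hGb (T - r)) hβpos.le
      · exact Real.rpow_nonneg hG0 _
      · exact mul_nonneg (Real.rpow_nonneg hN0 _) (Real.rpow_nonneg (hX0 _) _)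
    refine le_trans hstep2 (le_of_eq ?_)
    rw [Real.mul_rpow (Real.rpow_nonneg hK0 _) (Real.rpow_nonneg (hY0 _) _),
      ← Real.rpow_mul hK0, ← Real.rpow_mul (hY0 _), hθβ]
    rw [hC0def, hBdef]
    ring
  -- integral bounds
  have hint1 : (∫ u in (0:ℝ)..T, Xf u) ≤ N / 4 := by
    have h := phiF_exp_integral A hA e hlam hσ (3/2) 4 T (by norm_num) hT.le
    rw [show (3/2 - 1 : ℝ) = 1/2 by norm_num] at h
    exact le_trans (le_of_eq (by rw [hXdef])) h
  have hint2 : (∫ u in (0:ℝ)..T, Yf u) ≤ θ * K / 2 := by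
    have h := phiF_exp_integral A hA e hlam hσ (m + 1) (4 / (2 - γ)) T (by positivity) hT.le
    rw [show m + 1 - 1 = m by ring] at h
    refine le_trans (le_trans (le_of_eq (by rw [hYdef])) h) (le_of_eq ?_)
    rw [← hKdef, hθdef]
    field_simp
    ring
  -- Young / optimization
  set pa : ℝ := (N / 4) ^ (1/2 : ℝ) with hpadef
  set pb : ℝ := (θ * K / 2) ^ (1/2 : ℝ) with hpbdef
  have hpa0 : 0 < pa := Real.rpow_pos_of_pos (by positivity) _
  have hpb0 : 0 < pb := Real.rpow_pos_of_pos (by positivity) _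
  have hpa2 : pa * pa = N / 4 := by
    rw [hpadef, ← Real.rpow_add (by positivity : (0:ℝ) < N / 4)]
    norm_num
  have hpb2 : pb * pb = θ * K / 2 := by
    rw [hpbdef, ← Real.rpow_add (by positivity : (0:ℝ) < θ * K / 2)]
    norm_num
  set t : ℝ := pb / pa with htdef
  have htpos : 0 < t := by positivity
  have hXint : IntervalIntegrable Xf MeasureTheory.volume 0 T :=
    hXcont.intervalIntegrable _ _
  have hYint : IntervalIntegrable Yf MeasureTheory.volume 0 T :=
    hYcont.intervalIntegrable _ _
  have hBint : IntervalIntegrable B MeasureTheory.volume 0 T := hBcont.intervalIntegrable _ _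
  have hBbound : (∫ u in (0:ℝ)..T, B u) ≤ pa * pb := by
    have hY : ∀ u ∈ Set.Icc (0:ℝ) T, B u ≤ (t * Xf u + Yf u / t) / 2 := fun u _ =>
      young_sqrt (hX0 u) (hY0 u) htpos
    have h1 : (∫ u in (0:ℝ)..T, B u) ≤ ∫ u in (0:ℝ)..T, (t * Xf u + Yf u / t) / 2 := by
      apply intervalIntegral.integral_mono_on hT.le hBint ?_ hY
      exact (((continuous_const.mul hXcont).add (hYcont.div_const t)).div_const 2
        ).intervalIntegrable _ _
    have h2 : (∫ u in (0:ℝ)..T, (t * Xf u + Yf u / t) / 2) =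
        (t * (∫ u in (0:ℝ)..T, Xf u) + (∫ u in (0:ℝ)..T, Yf u) / t) / 2 := by
      rw [intervalIntegral.integral_div, intervalIntegral.integral_add (f := fun u => t * Xf u) (g := fun u => Yf u / t)
        ((continuous_const.mul hXcont).intervalIntegrable _ _)
        ((hYcont.div_const t).intervalIntegrable _ _),
        intervalIntegral.integral_const_mul, intervalIntegral.integral_div]
    have h3 : (t * (∫ u in (0:ℝ)..T, Xf u) + (∫ u in (0:ℝ)..T, Yf u) / t) / 2 ≤
        (t * (N / 4) + (θ * K / 2) / t) / 2 := by
      gcongr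
    have h4 : (t * (N / 4) + (θ * K / 2) / t) / 2 = pa * pb := by
      rw [htdef, ← hpa2, ← hpb2]
      field_simp
      ring
    linarith
  -- put it together
  have hmain : (∫ r in (0:ℝ)..T, ‖fracPow A (1/2) (Γ r)‖ ^ 2 *
      ‖fracPow A (α / 2) (Γ r)‖ ^ ((2:ℝ) / (2 - γ))) ≤ C0 * (pa * pb) := by
    have h1 : (∫ r in (0:ℝ)..T, ‖fracPow A (1/2) (Γ r)‖ ^ 2 *
        ‖fracPow A (α / 2) (Γ r)‖ ^ ((2:ℝ) / (2 - γ))) ≤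
        ∫ r in (0:ℝ)..T, C0 * B (T - r) := by
      apply intervalIntegral.integral_mono_on hT.le (hWcont.intervalIntegrable _ _) ?_ hpt
      exact (continuous_const.mul (hBcont.comp (continuous_const.sub continuous_id))
        ).intervalIntegrable _ _
    have h2 : (∫ r in (0:ℝ)..T, C0 * B (T - r)) = C0 * ∫ r in (0:ℝ)..T, B (T - r) := by
      rw [intervalIntegral.integral_const_mul]
    have h3 : (∫ r in (0:ℝ)..T, B (T - r)) = ∫ u in (0:ℝ)..T, B u := by
      rw [intervalIntegral.integral_comp_sub_left B T]
      norm_num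
    calc (∫ r in (0:ℝ)..T, ‖fracPow A (1/2) (Γ r)‖ ^ 2 *
        ‖fracPow A (α / 2) (Γ r)‖ ^ ((2:ℝ) / (2 - γ)))
        ≤ ∫ r in (0:ℝ)..T, C0 * B (T - r) := h1
      _ = C0 * ∫ u in (0:ℝ)..T, B u := by rw [h2, h3]
      _ ≤ C0 * (pa * pb) := mul_le_mul_of_nonneg_left hBbound hC00
  refine le_trans hmain (le_of_eq ?_)
  -- final arithmetic
  have hnorm2e : ‖fracPow A ((2 * α + γ - 2) / 4) e‖ ^ ((2:ℝ) / (2 - γ)) = K ^ β := by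
    have hcast : ‖fracPow A ((2 * α + γ - 2) / 4) e‖ ^ ((2:ℝ)) =
        ‖fracPow A ((2 * α + γ - 2) / 4) e‖ ^ (2:ℕ) := by
      rw [← Real.rpow_natCast _ 2]; norm_num
    rw [show (2:ℝ) / (2 - γ) = 2 * β by rw [hβdef]; ring,
      Real.rpow_mul (norm_nonneg _), hcast, hKe]
  rw [hNe, hnorm2e]
  have h4inv : ((4:ℝ)⁻¹) ^ (1/2 : ℝ) = 2⁻¹ := by
    rw [show (4:ℝ)⁻¹ = (2⁻¹ : ℝ) ^ (2:ℕ) by norm_num, ← Real.rpow_natCast (2⁻¹:ℝ) 2,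
      ← Real.rpow_mul (by norm_num : (0:ℝ) ≤ 2⁻¹)]
    norm_num
  have hpa' : pa = N ^ (1/2 : ℝ) * 2⁻¹ := by
    rw [hpadef, show N / 4 = N * (4:ℝ)⁻¹ by ring, Real.mul_rpow hN0 (by norm_num), h4inv]
  have hpb' : pb = (2 - γ) ^ (1/2 : ℝ) * (K ^ (1/2 : ℝ) * 2⁻¹) := by
    rw [hpbdef, show θ * K / 2 = (2 - γ) * (K * (4:ℝ)⁻¹) by rw [hθdef]; ring,
      Real.mul_rpow h2γ.le (by positivity), Real.mul_rpow hK0 (by norm_num), h4inv]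
  have hNN : N ^ (1/2 : ℝ) * N ^ (1/2 : ℝ) = N := by
    rw [← Real.rpow_add hNpos]
    norm_num
  have hKK : K ^ ((1 - θ) * β) * K ^ (1/2 : ℝ) = K ^ β := by
    rw [← Real.rpow_add hKpos]
    congr 1
    rw [sub_mul, one_mul]
    linarith [hθβ]
  have hfin : C0 * (pa * pb) =
      (N ^ (1/2:ℝ) * N ^ (1/2:ℝ)) * (K ^ ((1 - θ) * β) * K ^ (1/2:ℝ)) *
        ((2 - γ) ^ (1/2:ℝ) * 4⁻¹) := by
    rw [hC0def, hpa', hpb']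
    ring
  rw [hfin, hNN, hKK, Real.sqrt_eq_rpow]
  ring
end

section
/- Let H be a complex Hilbert space and A a bounded self-adjoint operator on H whose spectrum is contained in [λ₀, ∞) for some λ₀ > 0. Fix T > 0, θ ∈ (0, 1], and e ∈ H, and define φ(t) = (1/T) e^{-(T−t)A} e + (2t/T) A e^{-(T−t)A} e for t ∈ [0,T]. Then ∫₀^T ‖A^{θ/2} φ(t)‖² dt ≤ ‖A^{θ/2} e‖²/T + 2 ‖A^{(1+θ)/2} e‖². -/
open MeasureTheory

section Stmt13Aux

open NormedSpace
open scoped InnerProductSpace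

set_option maxHeartbeats 2000000

variable {H : Type*} [NormedAddCommGroup H] [InnerProductSpace ℂ H] [CompleteSpace H]

private lemma aux_smul_sa (A : H →L[ℂ] H) (hA : IsSelfAdjoint A) (r : ℝ) :
    IsSelfAdjoint (r • A) := by
  rw [IsSelfAdjoint, star_smul, star_trivial, hA.star_eq]

private lemma aux_inner_move (A : H →L[ℂ] H) (f : ℝ → ℝ) (x y : H) :
    ⟪cfc f A x, y⟫_ℂ = ⟪x, cfc f A y⟫_ℂ := by
  have h : IsSelfAdjoint (cfc f A) := cfc_predicate f A
  rw [ContinuousLinearMap.isSelfAdjoint_iff'] at h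
  conv_lhs => rw [← h]
  exact ContinuousLinearMap.adjoint_inner_left (cfc f A) y x

private lemma aux_norm_sq (A : H →L[ℂ] H) (f : ℝ → ℝ) (x : H)
    (hf : ContinuousOn f (spectrum ℝ A)) :
    ‖cfc f A x‖ ^ 2 = (⟪x, cfc (fun t => f t * f t) A x⟫_ℂ).re := by
  have h : cfc (fun t => f t * f t) A x = cfc f A (cfc f A x) := by
    rw [cfc_mul f f A hf hf]; rfl
  rw [h, ← aux_inner_move A f, ← @inner_self_eq_norm_sq ℂ]
  rfl

private lemma aux_exp_cfc (A : H →L[ℂ] H) (hA : IsSelfAdjoint A) (r : ℝ) :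
    exp (r • A) = cfc (fun x : ℝ => Real.exp (r * x)) A := by
  rw [← CFC.real_exp_eq_normedSpace_exp (aux_smul_sa A hA r),
    ← cfc_comp_smul r Real.exp A (by fun_prop) hA]
  simp [smul_eq_mul]

private lemma aux_exp_cfcR (A : H →L[ℂ] H) (hA : IsSelfAdjoint A) (r : ℝ) :
    exp (r • A) = cfc (fun x : ℝ => Real.exp (r * x)) A := by
  exact aux_exp_cfc A hA r


private lemma aux_A_mul (A : H →L[ℂ] H) (hA : IsSelfAdjoint A) (f : ℝ → ℝ) (x : H)
    (hf : ContinuousOn f (spectrum ℝ A)) :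
    A (cfc f A x) = cfc (fun y : ℝ => y * f y) A x := by
  have h := cfc_mul (fun y : ℝ => y) f A (by fun_prop) hf
  rw [cfc_id' ℝ A hA] at h
  rw [h, ContinuousLinearMap.mul_apply]


private lemma aux_re_inner_smul (r : ℝ) (x y : H) :
    (⟪x, r • y⟫_ℂ).re = r * (⟪x, y⟫_ℂ).re := by
  rw [show r • y = (r : ℂ) • y from rfl, inner_smul_right]
  simp

private lemma aux_deriv_inner (A : H →L[ℂ] H) (T : ℝ) (e b : H) (t : ℝ) :
    HasDerivAt (fun t : ℝ => (⟪b, exp ((2*(t-T)) • A) e⟫_ℂ).re)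
      (2 * (⟪b, A (exp ((2*(t-T)) • A) e)⟫_ℂ).re) t := by
  have hc : HasDerivAt (fun t : ℝ => 2*(t-T)) 2 t := by
    simpa using ((hasDerivAt_id t).sub_const T).const_mul 2
  have hop : HasDerivAt (fun t : ℝ => exp ((2*(t-T)) • A))
      ((2:ℝ) • (A * exp ((2*(t-T)) • A))) t := by
    have := (hasDerivAt_exp_smul_const' (𝕂 := ℝ) A (2*(t-T))).scomp t hc
    exact this
  have h2 := ((Complex.reCLM.comp ((innerSL ℂ b).restrictScalars ℝ)).comp
      (((ContinuousLinearMap.apply ℂ H e).restrictScalars ℝ))).hasFDerivAt.comp_hasDerivAt t hop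
  simp at h2
  exact h2

end Stmt13Aux

section Stmt13Main

open NormedSpace
open scoped InnerProductSpace

set_option maxHeartbeats 4000000

/-- For `A` self-adjoint with spectrum in `[λ₀, ∞)`, `λ₀ > 0`,
`θ ∈ (0,1]`, and `φ(t) = (1/T) e^{-(T-t)A} e + (2t/T) A e^{-(T-t)A} e`:
`∫₀^T ‖A^{θ/2} φ(t)‖² dt ≤ ‖A^{θ/2} e‖²/T + 2‖A^{(1+θ)/2} e‖²`. -/
theorem stmt13
    {H : Type*} [NormedAddCommGroup H] [InnerProductSpace ℂ H] [CompleteSpace H]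
    (A : H →L[ℂ] H) (hA : IsSelfAdjoint A)
    (lam : ℝ) (hlam : 0 < lam) (hspec : ∀ z ∈ spectrum ℂ A, lam ≤ z.re)
    (T : ℝ) (hT : 0 < T) (θ : ℝ) (hθ : θ ∈ Set.Ioc (0:ℝ) 1) (e : H)
    (φ : ℝ → H)
    (hφ : ∀ t, φ t = (1 / T) • (NormedSpace.exp ((-(T - t)) • A)) e
      + (2 * t / T) • A ((NormedSpace.exp ((-(T - t)) • A)) e)) :
    (∫ t in (0:ℝ)..T, ‖fracPow A (θ / 2) (φ t)‖ ^ 2) ≤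
      ‖fracPow A (θ / 2) e‖ ^ 2 / T + 2 * ‖fracPow A ((1 + θ) / 2) e‖ ^ 2 := by
  have hT' : T ≠ 0 := hT.ne'
  -- positivity of the real spectrum
  have hbot : ∀ x ∈ spectrum ℝ A, 0 < x := by
    intro x hx
    have hx' : (algebraMap ℝ ℂ x) ∈ spectrum ℂ A := spectrum.algebraMap_mem ℂ hx
    have h2 := hspec _ hx'
    simp only [Complex.coe_algebraMap, Complex.ofReal_re] at h2
    exact lt_of_lt_of_le hlam h2
  -- continuity facts
  have hCp : ∀ s : ℝ, ContinuousOn (fun x : ℝ => x ^ s) (spectrum ℝ A) := fun s x hx =>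
    (Real.continuousAt_rpow_const x s (Or.inl (hbot x hx).ne')).continuousWithinAt
  have hCg : ∀ r : ℝ, ContinuousOn (fun x : ℝ => Real.exp (r * x)) (spectrum ℝ A) := by
    intro r; fun_prop
  have hCpg : ∀ s r : ℝ, ContinuousOn (fun x : ℝ => x ^ s * Real.exp (r * x)) (spectrum ℝ A) :=
    fun s r => (hCp s).mul (hCg r)
  -- the key scalar quantities
  set K : ℝ → ℝ → ℝ := fun s t =>
    (⟪e, cfc (fun x : ℝ => x ^ s * Real.exp ((2*(t-T)) * x)) A e⟫_ℂ).re with hKdef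
  -- inner-product representation
  have hKinner : ∀ s t : ℝ, K s t =
      (⟪cfc (fun x : ℝ => x ^ s) A e, exp ((2*(t-T)) • A) e⟫_ℂ).re := by
    intro s t
    rw [aux_exp_cfcR A hA]
    have h1 : cfc (fun x : ℝ => x ^ s * Real.exp ((2*(t-T)) * x)) A e
        = cfc (fun x : ℝ => x ^ s) A (cfc (fun x : ℝ => Real.exp ((2*(t-T)) * x)) A e) := by
      rw [cfc_mul _ _ A (hCp s) (hCg _)]; rfl
    simp only [hKdef]
    rw [h1, ← aux_inner_move A (fun x : ℝ => x ^ s)]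
  -- derivative of K s
  have hderiv : ∀ s t : ℝ, HasDerivAt (K s) (2 * K (s+1) t) t := by
    intro s t
    have hfun : K s = fun t : ℝ =>
        (⟪cfc (fun x : ℝ => x ^ s) A e, exp ((2*(t-T)) • A) e⟫_ℂ).re :=
      funext (hKinner s)
    have hmain := aux_deriv_inner A T e (cfc (fun x : ℝ => x ^ s) A e) t
    rw [← hfun] at hmain
    have h2 : cfc (fun x : ℝ => x ^ s) A (cfc (fun x : ℝ => x * Real.exp ((2*(t-T)) * x)) A e)
        = cfc (fun x : ℝ => x ^ (s+1) * Real.exp ((2*(t-T)) * x)) A e := by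
      have h3 : cfc (fun x : ℝ => x ^ (s+1) * Real.exp ((2*(t-T)) * x)) A
          = cfc (fun x : ℝ => x ^ s * (x * Real.exp ((2*(t-T)) * x))) A := by
        apply cfc_congr
        intro x hx
        dsimp only
        rw [Real.rpow_add_one (hbot x hx).ne' s]; ring
      rw [h3, cfc_mul _ _ A (hCp s) (by exact (continuousOn_id.mul (hCg _)))]
      rfl
    have hval : (2 : ℝ) * (⟪cfc (fun x : ℝ => x ^ s) A e,
        A (exp ((2*(t-T)) • A) e)⟫_ℂ).re = 2 * K (s+1) t := by
      rw [aux_exp_cfcR A hA, aux_A_mul A hA _ e (hCg _),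
        aux_inner_move A (fun x : ℝ => x ^ s), h2]
      try simp only [hKdef]
    rw [hval] at hmain
    exact hmain
  -- norm-square representation
  have hKrepr : ∀ s t : ℝ, K s t
      = ‖cfc (fun x : ℝ => x ^ (s/2) * Real.exp ((t-T) * x)) A e‖ ^ 2 := by
    intro s t
    rw [aux_norm_sq A _ e (hCpg (s/2) (t-T))]
    have h1 : cfc (fun x : ℝ => (x ^ (s/2) * Real.exp ((t-T) * x))
          * (x ^ (s/2) * Real.exp ((t-T) * x))) A
        = cfc (fun x : ℝ => x ^ s * Real.exp ((2*(t-T)) * x)) A := by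
      apply cfc_congr
      intro x hx
      dsimp only
      rw [mul_mul_mul_comm, ← Real.rpow_add (hbot x hx), ← Real.exp_add, add_halves]
      try ring_nf
    rw [h1]
  have hK0 : ∀ s t : ℝ, 0 ≤ K s t := by
    intro s t; rw [hKrepr]; positivity
  -- value at t = T
  have hKT : ∀ s : ℝ, K s T = ‖cfc (fun x : ℝ => x ^ (s/2)) A e‖ ^ 2 := by
    intro s
    rw [hKrepr]
    have : (fun x : ℝ => x ^ (s/2) * Real.exp ((T-T) * x)) = fun x : ℝ => x ^ (s/2) := by
      funext x; simp
    rw [this]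
  -- monotonicity of K θ
  have hmono : Monotone (K θ) :=
    monotone_of_deriv_nonneg (fun t => (hderiv θ t).differentiableAt)
      (fun t => by rw [(hderiv θ t).deriv]; exact mul_nonneg (by norm_num) (hK0 _ t))
  have hcont : ∀ s : ℝ, Continuous (K s) := fun s =>
    continuous_iff_continuousAt.2 fun t => (hderiv s t).continuousAt
  -- the integrand identity
  have hInt : ∀ t : ℝ, ‖fracPow A (θ / 2) (φ t)‖ ^ 2
      = (1/T^2) * K θ t + ((4*t/T^2) * K (θ+1) t + (4*t^2/T^2) * K (θ+2) t) := by
    intro t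
    have hphi : fracPow A (θ / 2) (φ t)
        = cfc (fun x : ℝ => (1/T) * (x ^ (θ/2) * Real.exp ((t-T) * x))
            + (2*t/T) * (x ^ (θ/2) * (x * Real.exp ((t-T) * x)))) A e := by
      rw [hφ t]
      have hexp : exp ((-(T - t)) • A) = cfc (fun x : ℝ => Real.exp ((t-T) * x)) A := by
        rw [neg_sub]; exact aux_exp_cfc A hA (t-T)
      rw [hexp]
      have hAg : A (cfc (fun x : ℝ => Real.exp ((t-T) * x)) A e)
          = cfc (fun x : ℝ => x * Real.exp ((t-T) * x)) A e :=
        aux_A_mul A hA _ e (hCg _)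
      rw [hAg]
      show cfc (fun x : ℝ => x ^ (θ/2)) A _ = _
      rw [map_add, ContinuousLinearMap.map_smul_of_tower, ContinuousLinearMap.map_smul_of_tower]
      have h1 : cfc (fun x : ℝ => x ^ (θ/2)) A (cfc (fun x : ℝ => Real.exp ((t-T) * x)) A e)
          = cfc (fun x : ℝ => x ^ (θ/2) * Real.exp ((t-T) * x)) A e := by
        rw [cfc_mul _ _ A (hCp _) (hCg _)]; rfl
      have h2 : cfc (fun x : ℝ => x ^ (θ/2)) A
            (cfc (fun x : ℝ => x * Real.exp ((t-T) * x)) A e)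
          = cfc (fun x : ℝ => x ^ (θ/2) * (x * Real.exp ((t-T) * x))) A e := by
        rw [cfc_mul _ _ A (hCp _) (by exact (continuousOn_id.mul (hCg _)))]; rfl
      have hsum : cfc (fun x : ℝ => (1/T) * (x ^ (θ/2) * Real.exp ((t-T) * x))
            + (2*t/T) * (x ^ (θ/2) * (x * Real.exp ((t-T) * x)))) A
          = (1/T) • cfc (fun x : ℝ => x ^ (θ/2) * Real.exp ((t-T) * x)) A
            + (2*t/T) • cfc (fun x : ℝ => x ^ (θ/2) * (x * Real.exp ((t-T) * x))) A := by
        rw [cfc_add A _ _ (by exact continuousOn_const.mul (hCpg (θ/2) (t-T)))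
            (by exact continuousOn_const.mul ((hCp _).mul (continuousOn_id.mul (hCg _)))),
          cfc_const_mul (1/T) _ A (hCpg (θ/2) (t-T)),
          cfc_const_mul (2*t/T) _ A (by exact (hCp _).mul (continuousOn_id.mul (hCg _)))]
      rw [h1, h2, hsum]
      rfl
    have hp : ContinuousOn (fun x : ℝ => (1/T) * (x ^ (θ/2) * Real.exp ((t-T) * x))
        + (2*t/T) * (x ^ (θ/2) * (x * Real.exp ((t-T) * x)))) (spectrum ℝ A) := by
      exact (continuousOn_const.mul (hCpg (θ/2) (t-T))).add
        (continuousOn_const.mul ((hCp _).mul (continuousOn_id.mul (hCg _))))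
    rw [hphi, aux_norm_sq A _ e hp]
    have hsq : cfc (fun x : ℝ =>
          ((1/T) * (x ^ (θ/2) * Real.exp ((t-T) * x))
            + (2*t/T) * (x ^ (θ/2) * (x * Real.exp ((t-T) * x))))
          * ((1/T) * (x ^ (θ/2) * Real.exp ((t-T) * x))
            + (2*t/T) * (x ^ (θ/2) * (x * Real.exp ((t-T) * x))))) A
        = cfc (fun x : ℝ => (1/T^2) * (x ^ θ * Real.exp ((2*(t-T)) * x))
            + ((4*t/T^2) * (x ^ (θ+1) * Real.exp ((2*(t-T)) * x))
              + (4*t^2/T^2) * (x ^ (θ+2) * Real.exp ((2*(t-T)) * x)))) A := by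
      apply cfc_congr
      intro x hx
      dsimp only
      have hxx := hbot x hx
      have hE : Real.exp ((2*(t-T)) * x) = Real.exp ((t-T) * x) * Real.exp ((t-T) * x) := by
        rw [← Real.exp_add]; ring_nf
      have hc : x ^ (θ/2) * x ^ (θ/2) = x ^ θ := by
        rw [← Real.rpow_add hxx, add_halves]
      have h1 : x ^ (θ+1) = x ^ θ * x := Real.rpow_add_one hxx.ne' θ
      have h2 : x ^ (θ+2) = x ^ θ * (x * x) := by
        rw [show θ+2 = (θ+1)+1 by ring, Real.rpow_add_one hxx.ne', Real.rpow_add_one hxx.ne']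
        ring
      simp only [hE, h1, h2]
      linear_combination ((1/T + 2*t/T*x) * Real.exp ((t-T) * x))^2 * hc
    rw [hsq]
    rw [cfc_add A _ _
        (by exact continuousOn_const.mul ((hCp θ).mul (hCg _)))
        (by exact ((continuousOn_const.mul ((hCp (θ+1)).mul (hCg _))).add
          (continuousOn_const.mul ((hCp (θ+2)).mul (hCg _))))),
      cfc_add A _ _
        (by exact continuousOn_const.mul ((hCp (θ+1)).mul (hCg _)))
        (by exact continuousOn_const.mul ((hCp (θ+2)).mul (hCg _))),
      cfc_const_mul (1/T^2) _ A (hCpg θ _),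
      cfc_const_mul (4*t/T^2) _ A (hCpg (θ+1) _),
      cfc_const_mul (4*t^2/T^2) _ A (hCpg (θ+2) _)]
    simp only [ContinuousLinearMap.add_apply, ContinuousLinearMap.smul_apply,
      inner_add_right, Complex.add_re, aux_re_inner_smul, hKdef]
  -- derivative of the potential function G
  have hG : ∀ t : ℝ, HasDerivAt (fun t => 2*t^2/T^2 * K (θ+1) t)
      ((4*t/T^2) * K (θ+1) t + (4*t^2/T^2) * K (θ+2) t) t := by
    intro t
    have h1 : HasDerivAt (fun t : ℝ => 2*t^2/T^2) (4*t/T^2) t := by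
      have := ((hasDerivAt_pow 2 t).const_mul 2).div_const (T^2)
      refine this.congr_deriv ?_
      ring
    have h2 := h1.mul (hderiv (θ+1) t)
    refine h2.congr_deriv ?_
    ring
  -- integrability
  have hi1 : IntervalIntegrable (fun t => (1/T^2) * K θ t) volume 0 T :=
    (continuous_const.mul (hcont θ)).intervalIntegrable 0 T
  have hi2 : IntervalIntegrable
      (fun t => (4*t/T^2) * K (θ+1) t + (4*t^2/T^2) * K (θ+2) t) volume 0 T := by
    apply Continuous.intervalIntegrable
    exact (((continuous_const.mul continuous_id).div_const (T^2)).mul (hcont (θ+1))).add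
      (((continuous_const.mul (continuous_pow 2)).div_const (T^2)).mul (hcont (θ+2)))
  -- put everything together
  rw [intervalIntegral.integral_congr (g := fun t =>
      (1/T^2) * K θ t + ((4*t/T^2) * K (θ+1) t + (4*t^2/T^2) * K (θ+2) t))
      (fun t _ => hInt t)]
  rw [intervalIntegral.integral_add hi1 hi2]
  have hFTC : (∫ t in (0:ℝ)..T, ((4*t/T^2) * K (θ+1) t + (4*t^2/T^2) * K (θ+2) t))
      = 2*T^2/T^2 * K (θ+1) T - 2*0^2/T^2 * K (θ+1) 0 :=
    intervalIntegral.integral_eq_sub_of_hasDerivAt (fun t _ => hG t) hi2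
  rw [hFTC]
  have hbound : (∫ t in (0:ℝ)..T, (1/T^2) * K θ t) ≤ ‖fracPow A (θ / 2) e‖ ^ 2 / T := by
    have hle : (∫ t in (0:ℝ)..T, (1/T^2) * K θ t)
        ≤ ∫ _t in (0:ℝ)..T, (1/T^2) * K θ T := by
      apply intervalIntegral.integral_mono_on hT.le hi1 intervalIntegrable_const
      intro t ht
      have := hmono ht.2
      have h0 : (0:ℝ) ≤ 1/T^2 := by positivity
      exact mul_le_mul_of_nonneg_left this h0
    rw [intervalIntegral.integral_const] at hle
    have heq : (T - 0) • ((1/T^2) * K θ T) = ‖fracPow A (θ / 2) e‖ ^ 2 / T := by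
      rw [hKT θ]
      show (T - 0) * ((1/T^2) * ‖cfc (fun x : ℝ => x ^ (θ/2)) A e‖ ^ 2) = _
      rw [show fracPow A (θ/2) = cfc (fun x : ℝ => x ^ (θ/2)) A from rfl]
      field_simp
      try ring
    rw [heq] at hle
    exact hle
  have hval : 2*T^2/T^2 * K (θ+1) T - 2*0^2/T^2 * K (θ+1) 0
      = 2 * ‖fracPow A ((1 + θ) / 2) e‖ ^ 2 := by
    rw [hKT (θ+1)]
    have h1 : (fun x : ℝ => x ^ ((θ+1)/2)) = fun x : ℝ => x ^ ((1+θ)/2) := by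
      rw [add_comm]
    rw [show fracPow A ((1+θ)/2) = cfc (fun x : ℝ => x ^ ((1+θ)/2)) A from rfl, ← h1]
    field_simp
    try ring
  rw [hval]
  exact add_le_add hbound le_rfl

end Stmt13Main
end

section
/- Let H be a complex Hilbert space and A a bounded self-adjoint operator on H whose spectrum is contained in [λ₀, ∞) for some λ₀ > 0. Then for every β ∈ ℝ and every x ∈ H, ∫₀^∞ ‖A^β e^{-tA} x‖² dt = (1/2) ‖A^{β − 1/2} x‖². -/
open MeasureTheory

section StmtAux

open Filter

variable {H : Type*} [NormedAddCommGroup H] [InnerProductSpace ℂ H] [CompleteSpace H]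
variable {A : H →L[ℂ] H}

lemma stmt14_sa (hA : IsSelfAdjoint A) (t : ℝ) : IsSelfAdjoint ((-t) • A) := by
  rw [IsSelfAdjoint, star_smul, star_trivial, hA.star_eq]

set_option maxHeartbeats 1000000 in
lemma stmt14_expEq (hA : IsSelfAdjoint A) (t : ℝ) :
    (NormedSpace.exp ((-t) • A)) = cfc (fun s : ℝ => Real.exp (-t * s)) A := by
  have h1 : NormedSpace.exp ((-t) • A) = NormedSpace.exp ((-t) • A) := by
    rfl
  rw [h1, ← CFC.real_exp_eq_normedSpace_exp (stmt14_sa hA t),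
    ← cfc_comp_smul (-t) Real.exp A Real.continuous_exp.continuousOn hA]
  exact cfc_congr fun s _ => by simp [smul_eq_mul]

lemma stmt14_keyA (hA : IsSelfAdjoint A) (x : H) (f : ℝ → ℝ)
    (hf : ContinuousOn f (spectrum ℝ A)) :
    ‖cfc f A x‖ ^ 2 = (inner ℂ x (cfc (fun s => f s * f s) A x) : ℂ).re := by
  have hmul : cfc (fun s => f s * f s) A = cfc f A * cfc f A := cfc_mul f f A hf hf
  have hsa : IsSelfAdjoint (cfc f A) := cfc_predicate f A
  have hadj := ContinuousLinearMap.adjoint_inner_right (cfc f A) x ((cfc f A) x)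
  rw [hsa.adjoint_eq] at hadj
  rw [hmul, ContinuousLinearMap.mul_apply, hadj, inner_self_eq_norm_sq_to_K]
  norm_cast

/-- The continuous linear functional `h ↦ re ⟪x, cfcHom hA h x⟫`. -/
noncomputable def stmt14L (hA : IsSelfAdjoint A) (x : H) :
    C(spectrum ℝ A, ℝ) →L[ℝ] ℝ :=
  (Complex.reCLM.comp ((innerSL ℂ x).restrictScalars ℝ)).comp
    (((ContinuousLinearMap.apply ℂ H x).restrictScalars ℝ).comp
      { toLinearMap := ((cfcHom hA (R := ℝ)).toAlgHom).toLinearMap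
        cont := (cfcHom_isClosedEmbedding (R := ℝ) hA).continuous })

lemma stmt14L_apply (hA : IsSelfAdjoint A) (x : H) (h : C(spectrum ℝ A, ℝ)) :
    stmt14L hA x h = (inner ℂ x ((cfcHom (R := ℝ) hA h) x) : ℂ).re := rfl

variable (A) in
lemma stmt14_rpow_contOn (hpos : ∀ s ∈ spectrum ℝ A, 0 < s) (γ : ℝ) :
    ContinuousOn (fun s : ℝ => s ^ γ) (spectrum ℝ A) := fun s hs =>
  (Real.continuousAt_rpow_const s γ (Or.inl (hpos s hs).ne')).continuousWithinAt

variable (A) in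
/-- The family `t ↦ (s ↦ s^(2β) e^{-2ts})` as a continuous map. -/
noncomputable def stmt14F (hpos : ∀ s ∈ spectrum ℝ A, 0 < s) (β : ℝ) :
    C(ℝ, C(spectrum ℝ A, ℝ)) :=
  ContinuousMap.curry
    ⟨fun p : ℝ × spectrum ℝ A => ((p.2 : ℝ) ^ (2*β)) * Real.exp (-2 * p.1 * p.2),
     by
      apply Continuous.mul
      · exact ((stmt14_rpow_contOn A hpos (2*β)).restrict).comp continuous_snd
      · apply Real.continuous_exp.comp
        fun_prop⟩

set_option maxHeartbeats 1000000 in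
lemma stmt14_keyB (hA : IsSelfAdjoint A) (hpos : ∀ s ∈ spectrum ℝ A, 0 < s)
    (β : ℝ) (x : H) (t : ℝ) :
    ‖fracPow A β ((NormedSpace.exp ((-t) • A)) x)‖ ^ 2
      = stmt14L hA x (stmt14F A hpos β t) := by
  have hexp : ContinuousOn (fun s : ℝ => Real.exp (-t * s)) (spectrum ℝ A) := by fun_prop
  have hprod : ContinuousOn (fun s : ℝ => s ^ β * Real.exp (-t * s)) (spectrum ℝ A) :=
    (stmt14_rpow_contOn A hpos β).mul hexp
  have h1 : fracPow A β ((cfc (fun s : ℝ => Real.exp (-t * s)) A) x)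
      = cfc (fun s : ℝ => s ^ β * Real.exp (-t * s)) A x := by
    rw [fracPow, ← ContinuousLinearMap.mul_apply,
      ← cfc_mul _ _ A (stmt14_rpow_contOn A hpos β) hexp]
  have h2 : cfc (fun s : ℝ => (s ^ β * Real.exp (-t * s)) * (s ^ β * Real.exp (-t * s))) A
      = cfc (fun s : ℝ => s ^ (2*β) * Real.exp (-2 * t * s)) A := by
    apply cfc_congr
    intro s hs
    have hs0 := hpos s hs
    have e1 : Real.exp (-t * s) * Real.exp (-t * s) = Real.exp (-2 * t * s) := by
      rw [← Real.exp_add]; ring_nf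
    have e2 : s ^ β * s ^ β = s ^ (2*β) := by
      rw [← Real.rpow_add hs0]; ring_nf
    calc (s ^ β * Real.exp (-t * s)) * (s ^ β * Real.exp (-t * s))
        = (s ^ β * s ^ β) * (Real.exp (-t * s) * Real.exp (-t * s)) := by ring
      _ = s ^ (2*β) * Real.exp (-2 * t * s) := by rw [e1, e2]
  rw [stmt14_expEq hA t, h1, stmt14_keyA hA x _ hprod, h2,
    cfc_apply (fun s : ℝ => s ^ (2*β) * Real.exp (-2 * t * s)) A hA ((stmt14_rpow_contOn A hpos (2*β)).mul (by fun_prop)), stmt14L_apply]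
  congr 1

variable (A) in
/-- `s ↦ s^(2β) (1 - e^{-2Ts})/(2s)`. -/
noncomputable def stmt14G (hpos : ∀ s ∈ spectrum ℝ A, 0 < s) (β T : ℝ) :
    C(spectrum ℝ A, ℝ) :=
  ⟨fun s => ((s : ℝ) ^ (2*β)) * ((1 - Real.exp (-2 * T * s)) / (2 * s)),
   by
    apply Continuous.mul
    · exact (stmt14_rpow_contOn A hpos (2*β)).restrict
    · apply Continuous.div
      · fun_prop
      · fun_prop
      · exact fun s => by have := hpos s s.2; positivity⟩

variable (A) in
/-- `s ↦ (1/2) s^(2β - 1)`. -/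
noncomputable def stmt14Ginf (hpos : ∀ s ∈ spectrum ℝ A, 0 < s) (β : ℝ) :
    C(spectrum ℝ A, ℝ) :=
  ⟨fun s => (1/2 : ℝ) * (s : ℝ) ^ (2*β - 1),
   continuous_const.mul ((stmt14_rpow_contOn A hpos (2*β - 1)).restrict)⟩

lemma stmt14_keyE (hpos : ∀ s ∈ spectrum ℝ A, 0 < s) (β T : ℝ) :
    (∫ t in (0:ℝ)..T, stmt14F A hpos β t) = stmt14G A hpos β T := by
  ext s
  have hInt : IntervalIntegrable (fun t => stmt14F A hpos β t) MeasureTheory.volume 0 T :=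
    (stmt14F A hpos β).continuous.intervalIntegrable 0 T
  have heval := (ContinuousMap.evalCLM ℝ s).intervalIntegral_comp_comm hInt
  have hs0 : 0 < (s : ℝ) := hpos s s.2
  have goal_eq : (∫ t in (0:ℝ)..T, stmt14F A hpos β t) s
      = ∫ t in (0:ℝ)..T, ((s : ℝ) ^ (2*β)) * Real.exp (-2 * t * s) := heval.symm
  rw [goal_eq, intervalIntegral.integral_const_mul]
  show (_ : ℝ) * _ = (_ : ℝ) * _
  congr 1
  have hd : ∀ u ∈ Set.uIcc (0:ℝ) T,
      HasDerivAt (fun v : ℝ => Real.exp (-2 * v * s) / (-2 * (s:ℝ)))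
        (Real.exp (-2 * u * s)) u := by
    intro u _
    have h1 : HasDerivAt (fun v : ℝ => -2 * v * (s:ℝ)) (-2 * (s:ℝ)) u := by
      simpa using ((hasDerivAt_id u).const_mul (-2:ℝ)).mul_const (s:ℝ)
    have h3 := h1.exp.div_const (-2 * (s:ℝ))
    rw [mul_div_cancel_right₀ _ (mul_ne_zero (by norm_num : (-2:ℝ) ≠ 0) hs0.ne')] at h3
    exact h3
  have hci : IntervalIntegrable (fun u : ℝ => Real.exp (-2 * u * s))
      MeasureTheory.volume 0 T := by
    apply Continuous.intervalIntegrable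
    fun_prop
  rw [intervalIntegral.integral_eq_sub_of_hasDerivAt hd hci]
  rw [show (-2 : ℝ) * 0 * (s:ℝ) = 0 by ring, Real.exp_zero]
  field_simp
  ring

lemma stmt14_norm_sub {lam M : ℝ} (hlam : 0 < lam)
    (hspec : ∀ s ∈ spectrum ℝ A, lam ≤ s)
    (hpos : ∀ s ∈ spectrum ℝ A, 0 < s) (β : ℝ)
    (hM : ∀ s ∈ spectrum ℝ A, |(s : ℝ) ^ (2*β)| ≤ M) (hMnn : 0 ≤ M)
    {T : ℝ} (hT : 0 ≤ T) :
    ‖stmt14G A hpos β T - stmt14Ginf A hpos β‖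
      ≤ M / (2*lam) * Real.exp (-(2*lam) * T) := by
  rw [ContinuousMap.norm_le _ (by positivity)]
  intro s
  have hs0 : 0 < (s : ℝ) := hpos s s.2
  have hsl : lam ≤ (s : ℝ) := hspec s s.2
  rw [ContinuousMap.sub_apply]
  have hval : stmt14G A hpos β T s - stmt14Ginf A hpos β s
      = -(((s:ℝ) ^ (2*β)) * Real.exp (-2 * T * s) / (2 * s)) := by
    show ((s:ℝ) ^ (2*β)) * ((1 - Real.exp (-2 * T * s)) / (2 * (s:ℝ)))
        - (1/2 : ℝ) * (s:ℝ) ^ (2*β - 1) = _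
    have h1 : (s:ℝ) ^ (2*β - 1) = (s:ℝ) ^ (2*β) / s := by
      rw [Real.rpow_sub hs0, Real.rpow_one]
    rw [h1]
    field_simp
    ring
  rw [hval, Real.norm_eq_abs, abs_neg, abs_div, abs_mul,
    abs_of_pos (Real.exp_pos _), abs_of_pos (by positivity : (0:ℝ) < 2 * s),
    div_mul_eq_mul_div]
  apply div_le_div₀ (by positivity) ?_ (by positivity) (by linarith)
  apply mul_le_mul (hM s s.2) (Real.exp_le_exp.mpr (by nlinarith)) (Real.exp_pos _).le hMnn

end StmtAux

set_option maxHeartbeats 1000000 in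
/-- For `A` self-adjoint with spectrum in `[λ₀, ∞)`, `λ₀ > 0`,
every `β ∈ ℝ` and `x ∈ H`: `∫₀^∞ ‖A^β e^{-tA} x‖² dt = (1/2)‖A^{β-1/2} x‖²`. -/
theorem stmt14
    {H : Type*} [NormedAddCommGroup H] [InnerProductSpace ℂ H] [CompleteSpace H]
    (A : H →L[ℂ] H) (hA : IsSelfAdjoint A)
    (lam : ℝ) (hlam : 0 < lam) (hspec : ∀ z ∈ spectrum ℂ A, lam ≤ z.re)
    (β : ℝ) (x : H) :
    (∫ t in Set.Ioi (0:ℝ), ‖fracPow A β ((NormedSpace.exp ((-t) • A)) x)‖ ^ 2) =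
      1 / 2 * ‖fracPow A (β - 1/2) x‖ ^ 2 := by
  classical
  open Filter in
  -- real spectrum bounds
  have hspecR : ∀ s ∈ spectrum ℝ A, lam ≤ s := by
    intro s hs
    have h1 : (algebraMap ℝ ℂ s) ∈ spectrum ℂ A := spectrum.algebraMap_mem ℂ hs
    have h2 := hspec _ h1
    simpa using h2
  have hpos : ∀ s ∈ spectrum ℝ A, 0 < s := fun s hs => hlam.trans_le (hspecR s hs)
  set L := stmt14L hA x with hLdef
  set F := stmt14F A hpos β with hFdef
  -- bound on s^(2β)
  obtain ⟨M0, hM0⟩ := (spectrum.isCompact (𝕜 := ℝ) A).exists_bound_of_continuousOn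
    (stmt14_rpow_contOn A hpos (2*β))
  set M := max M0 0 with hMdef
  have hMnn : (0:ℝ) ≤ M := le_max_right _ _
  have hM : ∀ s ∈ spectrum ℝ A, |(s : ℝ) ^ (2*β)| ≤ M := fun s hs =>
    (hM0 s hs).trans (le_max_left _ _)
  -- integrand rewrite
  have hinteg : (fun t : ℝ => ‖fracPow A β ((NormedSpace.exp ((-t) • A)) x)‖ ^ 2)
      = fun t => L (F t) := funext fun t => stmt14_keyB hA hpos β x t
  rw [hinteg]
  -- integrability on Ioi 0
  have hFnorm : ∀ t ∈ Set.Ioi (0:ℝ), ‖L (F t)‖ ≤ (‖L‖ * M) * Real.exp (-(2*lam) * t) := by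
    intro t ht
    have ht0 : (0:ℝ) < t := ht
    have hFt : ‖F t‖ ≤ M * Real.exp (-(2*lam) * t) := by
      rw [ContinuousMap.norm_le _ (by positivity)]
      intro s
      have hs0 : 0 < (s:ℝ) := hpos s s.2
      have hsl : lam ≤ (s:ℝ) := hspecR s s.2
      show ‖((s : ℝ) ^ (2*β)) * Real.exp (-2 * t * s)‖ ≤ _
      rw [Real.norm_eq_abs, abs_mul, abs_of_pos (Real.exp_pos _)]
      apply mul_le_mul (hM s s.2) (Real.exp_le_exp.mpr (by nlinarith))
        (Real.exp_pos _).le hMnn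
    calc ‖L (F t)‖ ≤ ‖L‖ * ‖F t‖ := L.le_opNorm _
      _ ≤ ‖L‖ * (M * Real.exp (-(2*lam) * t)) :=
          mul_le_mul_of_nonneg_left hFt (norm_nonneg L)
      _ = (‖L‖ * M) * Real.exp (-(2*lam) * t) := by ring
  have hIntL : IntegrableOn (fun t => L (F t)) (Set.Ioi (0:ℝ)) := by
    refine Integrable.mono'
      ((exp_neg_integrableOn_Ioi 0 (by positivity : (0:ℝ) < 2*lam)).const_mul (‖L‖ * M))
      ((L.continuous.comp F.continuous).aestronglyMeasurable.restrict) ?_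
    exact (ae_restrict_iff' measurableSet_Ioi).mpr (Filter.Eventually.of_forall hFnorm)
  -- first limit
  have ht1 : Tendsto (fun T : ℝ => ∫ t in (0:ℝ)..T, L (F t)) atTop
      (nhds (∫ t in Set.Ioi (0:ℝ), L (F t))) :=
    intervalIntegral_tendsto_integral_Ioi 0 hIntL tendsto_id
  -- identification of partial integrals
  have hDE : ∀ T : ℝ, (∫ t in (0:ℝ)..T, L (F t)) = L (stmt14G A hpos β T) := by
    intro T
    rw [L.intervalIntegral_comp_comm (F.continuous.intervalIntegrable 0 T),
      stmt14_keyE hpos β T]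
  -- second limit
  have hGlim : Tendsto (fun T : ℝ => stmt14G A hpos β T) atTop
      (nhds (stmt14Ginf A hpos β)) := by
    rw [tendsto_iff_norm_sub_tendsto_zero]
    apply squeeze_zero_norm'
    · filter_upwards [Filter.eventually_ge_atTop (0:ℝ)] with T hT
      simpa using stmt14_norm_sub hlam hspecR hpos β hM hMnn hT
    · have h1 : Tendsto (fun T : ℝ => Real.exp (-(2*lam) * T)) atTop (nhds 0) := by
        have := Real.tendsto_exp_neg_atTop_nhds_zero.comp
          (tendsto_id.const_mul_atTop (by positivity : (0:ℝ) < 2*lam))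
        refine this.congr fun T => by simp [Function.comp]
      simpa using h1.const_mul (M / (2*lam))
  have ht2 : Tendsto (fun T : ℝ => ∫ t in (0:ℝ)..T, L (F t)) atTop
      (nhds (L (stmt14Ginf A hpos β))) := by
    simp_rw [hDE]
    exact (L.continuous.tendsto _).comp hGlim
  have hmain : (∫ t in Set.Ioi (0:ℝ), L (F t)) = L (stmt14Ginf A hpos β) :=
    tendsto_nhds_unique ht1 ht2
  rw [hmain]
  -- compute the right-hand side
  have hc1 : ContinuousOn (fun s : ℝ => (1/2 : ℝ) * s ^ (2*β - 1)) (spectrum ℝ A) :=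
    continuousOn_const.mul (stmt14_rpow_contOn A hpos (2*β - 1))
  have hGinf_eq : L (stmt14Ginf A hpos β)
      = (inner ℂ x (cfc (fun s : ℝ => (1/2 : ℝ) * s ^ (2*β - 1)) A x) : ℂ).re := by
    rw [cfc_apply _ A hA hc1, stmt14L_apply]
    rfl
  rw [hGinf_eq]
  have hhalf : cfc (fun s : ℝ => (1/2 : ℝ) * s ^ (2*β - 1)) A
      = (1/2 : ℝ) • cfc (fun s : ℝ => s ^ (2*β - 1)) A :=
    cfc_const_mul (1/2 : ℝ) _ A (stmt14_rpow_contOn A hpos (2*β - 1))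
  have hsq : cfc (fun s : ℝ => s ^ (2*β - 1)) A
      = cfc (fun s : ℝ => (fun u : ℝ => u ^ (β - 1/2)) s * (fun u : ℝ => u ^ (β - 1/2)) s) A := by
    apply cfc_congr
    intro s hs
    have hs0 := hpos s hs
    show s ^ (2*β - 1) = s ^ (β - 1/2) * s ^ (β - 1/2)
    rw [← Real.rpow_add hs0]
    congr 1
    ring
  have hRHSnorm : ‖fracPow A (β - 1/2) x‖ ^ 2
      = (inner ℂ x (cfc (fun s : ℝ => s ^ (2*β - 1)) A x) : ℂ).re := by
    rw [fracPow, stmt14_keyA hA x _ (stmt14_rpow_contOn A hpos (β - 1/2)), ← hsq]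
  rw [hhalf, hRHSnorm, ContinuousLinearMap.smul_apply,
    RCLike.real_smul_eq_coe_smul (K := ℂ), inner_smul_right]
  simp
end
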